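/- arXiv:2406.14851 — 3 statements merged into one kernel-verified Lean document; each statement's English description precedes it below -/
import Mathlib

section
/- For every integer n ≥ 0, the bipartition number satisfies the recursion p₂(n) = p(n/2) + Σ_{k∈ℤ∖{0}} (−1)^{k−1} p₂(n − k²), where p(n/2) is interpreted as 0 when n is odd and p₂(m) = 0 when m < 0. Equivalently, p₂(n) = p(n/2) + 2·Σ_{k≥1} (−1)^{k−1} p₂(n − k²). -/
/-- The partition number `p(n)`: the number of partitions of `n`. -/
noncomputable def partitionNumber (n : ℕ) : ℕ := Nat.card (Nat.Partition n)

/-- The bipartition number `p₂(n)`: the number of ordered pairs `(λ, μ)` of partitions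
with `|λ| + |μ| = n`. -/
noncomputable def bipartitionNumber (n : ℕ) : ℕ :=
  Nat.card {x : (Σ a : ℕ, Nat.Partition a) × (Σ b : ℕ, Nat.Partition b) // x.1.1 + x.2.1 = n}

/-- `p₂` extended to the integers, with value `0` at negative integers. -/
noncomputable def bipartitionNumberZ (m : ℤ) : ℤ := if 0 ≤ m then (bipartitionNumber m.toNat : ℤ) else 0

open PowerSeries Finset
open Finset.HasAntidiagonal

noncomputable section PartA
open scoped Classical

variable {α : Type*}
universe u
variable {ι : Type u}

/-- A convenience constructor for the power series whose coefficients indicate a subset. -/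
def indicatorSeries (α : Type*) [Semiring α] (s : Set ℕ) : PowerSeries α :=
  PowerSeries.mk fun n => if n ∈ s then 1 else 0

theorem coeff_indicator (s : Set ℕ) [Semiring α] (n : ℕ) :
    coeff n (indicatorSeries α s) = if n ∈ s then 1 else 0 :=
  coeff_mk _ _

theorem coeff_indicator_pos (s : Set ℕ) [Semiring α] (n : ℕ) (h : n ∈ s) :
    coeff n (indicatorSeries α s) = 1 := by rw [coeff_indicator, if_pos h]

theorem coeff_indicator_neg (s : Set ℕ) [Semiring α] (n : ℕ) (h : n ∉ s) :
    coeff n (indicatorSeries α s) = 0 := by rw [coeff_indicator, if_neg h]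

theorem constantCoeff_indicator (s : Set ℕ) [Semiring α] :
    constantCoeff (indicatorSeries α s) = if 0 ∈ s then 1 else 0 :=
  rfl

theorem two_series (i : ℕ) [Semiring α] :
    1 + (X : PowerSeries α) ^ i.succ = indicatorSeries α {0, i.succ} := by
  ext n
  simp only [coeff_indicator, coeff_one, coeff_X_pow, Set.mem_insert_iff, Set.mem_singleton_iff,
    map_add]
  cases' n with d
  · simp [(Nat.succ_ne_zero i).symm]
  · simp [Nat.succ_ne_zero d]

theorem num_series' [Field α] (i : ℕ) :
    (1 - (X : PowerSeries α) ^ (i + 1))⁻¹ = indicatorSeries α {k | i + 1 ∣ k} := by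
  rw [PowerSeries.inv_eq_iff_mul_eq_one]
  · ext n
    cases n with
    | zero => simp [mul_sub, zero_pow, constantCoeff_indicator]
    | succ n =>
      simp only [coeff_one, if_false, mul_sub, mul_one, coeff_indicator,
        LinearMap.map_sub, reduceCtorEq]
      simp_rw [coeff_mul, coeff_X_pow, coeff_indicator, @boole_mul _ _ _ _]
      simp only [← ite_and, Finset.sum_boole, Set.mem_setOf_eq, sub_eq_iff_eq_add, zero_add]
      symm
      split_ifs with h
      · suffices #{a ∈ antidiagonal (n + 1) | i + 1 ∣ a.fst ∧ a.snd = i + 1} = 1 by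
          convert congr_arg ((↑) : ℕ → α) this; norm_cast
        rw [card_eq_one]
        cases' h with p hp
        refine ⟨((i + 1) * (p - 1), i + 1), ?_⟩
        ext ⟨a₁, a₂⟩
        simp only [mem_filter, Prod.mk.injEq, HasAntidiagonal.mem_antidiagonal, mem_singleton]
        constructor
        · rintro ⟨a_left, ⟨a, rfl⟩, rfl⟩
          refine ⟨?_, rfl⟩
          rw [Nat.mul_sub_left_distrib, ← hp, ← a_left, mul_one, Nat.add_sub_cancel]
        · rintro ⟨rfl, rfl⟩
          match p with
          | 0 => rw [mul_zero] at hp; cases hp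
          | p + 1 => rw [hp]; simp [mul_add]
      · suffices #{a ∈ antidiagonal (n + 1) | i + 1 ∣ a.fst ∧ a.snd = i + 1} = 0 by
          convert congr_arg ((↑) : ℕ → α) this; norm_cast
        rw [card_eq_zero]
        apply eq_empty_of_forall_notMem
        simp only [Prod.forall, mem_filter, not_and, HasAntidiagonal.mem_antidiagonal]
        rintro _ h₁ h₂ ⟨a, rfl⟩ rfl
        apply h
        simp [← h₂]
  · simp [zero_pow]

-- The main workhorse of the partition theorem proof.
theorem partialGF_prop (α : Type*) [CommSemiring α] (n : ℕ) (s : Finset ℕ) (hs : ∀ i ∈ s, 0 < i)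
    (c : ℕ → Set ℕ) (hc : ∀ i, i ∉ s → 0 ∈ c i) :
    #{p : n.Partition | (∀ j, p.parts.count j ∈ c j) ∧ ∀ j ∈ p.parts, j ∈ s} =
      coeff n (∏ i ∈ s, indicatorSeries α ((· * i) '' c i)) := by
  simp_rw [coeff_prod, coeff_indicator, prod_boole, sum_boole]
  apply congr_arg
  simp only [mem_univ, forall_true_left, not_and, not_forall, exists_prop,
    Set.mem_image, not_exists]
  set φ : (a : Nat.Partition n) →
    a ∈ filter (fun p ↦ (∀ (j : ℕ), Multiset.count j p.parts ∈ c j) ∧ ∀ j ∈ p.parts, j ∈ s) univ →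
    ℕ →₀ ℕ := fun p _ => {
      toFun := fun i => Multiset.count i p.parts • i
      support := Finset.filter (fun i => i ≠ 0) p.parts.toFinset
      mem_support_toFun := fun a => by
        simp only [smul_eq_mul, ne_eq, mul_eq_zero, Multiset.count_eq_zero]
        rw [not_or, not_not]
        simp only [Multiset.mem_toFinset, not_not, mem_filter] }
  refine Finset.card_bij φ ?_ ?_ ?_
  · intro a ha
    simp only [φ, not_forall, not_exists, not_and, exists_prop, mem_filter]
    rw [mem_finsuppAntidiag]
    dsimp only [ne_eq, smul_eq_mul, id_eq, eq_mpr_eq_cast, le_eq_subset, Finsupp.coe_mk]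
    simp only [mem_univ, forall_true_left, not_and, not_forall, exists_prop,
      mem_filter, true_and] at ha
    refine ⟨⟨?_, fun i ↦ ?_⟩, fun i _ ↦ ⟨a.parts.count i, ha.1 i, rfl⟩⟩
    · conv_rhs => simp [← a.parts_sum]
      rw [sum_multiset_count_of_subset _ s]
      · simp only [smul_eq_mul]
      · intro i
        simp only [Multiset.mem_toFinset, not_not, mem_filter]
        apply ha.2
    · simp only [ne_eq, Multiset.mem_toFinset, not_not, mem_filter, and_imp]
      exact fun hi _ ↦ ha.2 i hi
  · intro p₁ hp₁ p₂ hp₂ h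
    apply Nat.Partition.ext
    simp only [true_and, mem_univ, mem_filter] at hp₁ hp₂
    ext i
    simp only [φ, ne_eq, Multiset.mem_toFinset, not_not, smul_eq_mul, Finsupp.mk.injEq] at h
    by_cases hi : i = 0
    · rw [hi]
      rw [Multiset.count_eq_zero_of_notMem]
      · rw [Multiset.count_eq_zero_of_notMem]
        intro a; exact Nat.lt_irrefl 0 (hs 0 (hp₂.2 0 a))
      intro a; exact Nat.lt_irrefl 0 (hs 0 (hp₁.2 0 a))
    · rw [← mul_left_inj' hi]
      rw [funext_iff] at h
      exact h.2 i
  · simp only [φ, mem_filter, mem_finsuppAntidiag, mem_univ, exists_prop, true_and, and_assoc]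
    rintro f ⟨hf, hf₃, hf₄⟩
    have hf' : f ∈ finsuppAntidiag s n := mem_finsuppAntidiag.mpr ⟨hf, hf₃⟩
    simp only [mem_finsuppAntidiag] at hf'
    refine ⟨⟨∑ i ∈ s, Multiset.replicate (f i / i) i, ?_, ?_⟩, ?_, ?_, ?_⟩
    · intro i hi
      simp only [exists_prop, Multiset.mem_sum, mem_map, Function.Embedding.coeFn_mk] at hi
      rcases hi with ⟨t, ht, z⟩
      apply hs
      rwa [Multiset.eq_of_mem_replicate z]
    · simp_rw [Multiset.sum_sum, Multiset.sum_replicate, Nat.nsmul_eq_mul]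
      rw [← hf'.1]
      refine sum_congr rfl fun i hi => Nat.div_mul_cancel ?_
      rcases hf₄ i hi with ⟨w, _, hw₂⟩
      rw [← hw₂]
      exact dvd_mul_left _ _
    · intro i
      simp_rw [Multiset.count_sum', Multiset.count_replicate, sum_ite_eq']
      split_ifs with h
      · rcases hf₄ i h with ⟨w, hw₁, hw₂⟩
        rwa [← hw₂, Nat.mul_div_cancel _ (hs i h)]
      · exact hc _ h
    · intro i hi
      rw [Multiset.mem_sum] at hi
      rcases hi with ⟨j, hj₁, hj₂⟩
      rwa [Multiset.eq_of_mem_replicate hj₂]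
    · ext i
      simp_rw [Multiset.count_sum', Multiset.count_replicate, sum_ite_eq']
      simp only [ne_eq, Multiset.mem_toFinset, not_not, smul_eq_mul, ite_mul,
        zero_mul, Finsupp.coe_mk]
      split_ifs with h
      · apply Nat.div_mul_cancel
        rcases hf₄ i h with ⟨w, _, hw₂⟩
        apply Dvd.intro_left _ hw₂
      · apply symm
        rw [← Finsupp.notMem_support_iff]
        exact notMem_mono hf'.2 h


/-- the coefficients of `∏ 1/(1-X^(i+1))` count partitions. -/
theorem coeff_Fp (L n : ℕ) (h : n ≤ L) :
    coeff n (∏ i ∈ range L, (1 - X ^ (i+1) : PowerSeries ℚ)⁻¹) = partitionNumber n := by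
  have hprop := partialGF_prop ℚ n ((range L).map ⟨Nat.succ, Nat.succ_injective⟩)
    (fun i hi => by
      obtain ⟨j, -, rfl⟩ := mem_map.mp hi
      exact Nat.succ_pos j)
    (fun _ => Set.univ) (fun _ _ => trivial)
  rw [Finset.prod_map] at hprop
  have heq : ∀ i : ℕ, indicatorSeries ℚ ((· * (⟨Nat.succ, Nat.succ_injective⟩ : ℕ ↪ ℕ) i) ''
      Set.univ) = (1 - X ^ (i+1) : PowerSeries ℚ)⁻¹ := by
    intro i
    rw [num_series']
    apply congrArg
    ext k
    simp only [Set.mem_image, Set.mem_univ, true_and, Set.mem_setOf_eq,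
      Function.Embedding.coeFn_mk]
    constructor
    · rintro ⟨p, rfl⟩; exact Dvd.intro_left p rfl
    · rintro ⟨p, rfl⟩; exact ⟨p, mul_comm _ _⟩
  simp_rw [heq] at hprop
  rw [← hprop]
  apply congrArg
  rw [partitionNumber, Nat.card_eq_fintype_card]
  rw [← Fintype.card_subtype]
  apply Fintype.card_congr
  apply Equiv.subtypeUnivEquiv
  intro p
  constructor
  · intro j; trivial
  · intro j hj
    simp only [mem_map, mem_range, Function.Embedding.coeFn_mk]
    have hj1 : 0 < j := p.parts_pos hj
    have hj2 : j ≤ n := by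
      simpa [p.parts_sum] using Multiset.single_le_sum (fun _ _ => Nat.zero_le _) _ hj
    exact ⟨j - 1, by omega, by omega⟩

/-- the coefficients of `∏ 1/(1-X^(2i+2))` count partitions into even parts. -/
theorem coeff_F2p (L n : ℕ) (h : n ≤ 2*L) :
    coeff n (∏ i ∈ range L, (1 - X ^ (2*i+2) : PowerSeries ℚ)⁻¹)
      = Nat.card {p : Nat.Partition n // ∀ j ∈ p.parts, 2 ∣ j} := by
  have hprop := partialGF_prop ℚ n ((range L).map ⟨fun i => 2*i+2, StrictMono.injective fun x y h => by show 2*x+2 < 2*y+2; omega⟩)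
    (fun i hi => by
      obtain ⟨j, -, rfl⟩ := mem_map.mp hi
      simp only [Function.Embedding.coeFn_mk]
      omega)
    (fun _ => Set.univ) (fun _ _ => trivial)
  rw [Finset.prod_map] at hprop
  have heq : ∀ i : ℕ, indicatorSeries ℚ
      ((· * (⟨fun i => 2*i+2, StrictMono.injective fun x y h => by show 2*x+2 < 2*y+2; omega⟩ : ℕ ↪ ℕ) i) '' Set.univ)
      = (1 - X ^ (2*i+2) : PowerSeries ℚ)⁻¹ := by
    intro i
    have h2 : 2*i+2 = (2*i+1)+1 := by omega
    rw [h2, num_series']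
    apply congrArg
    ext k
    simp only [Set.mem_image, Set.mem_univ, true_and, Set.mem_setOf_eq,
      Function.Embedding.coeFn_mk]
    constructor
    · rintro ⟨p, rfl⟩
      exact ⟨p, by ring⟩
    · rintro ⟨p, rfl⟩
      exact ⟨p, by ring⟩
  simp_rw [heq] at hprop
  rw [← hprop]
  apply congrArg
  rw [Nat.card_eq_fintype_card, ← Fintype.card_subtype]
  apply Fintype.card_congr
  apply Equiv.subtypeEquivRight
  intro p
  constructor
  · rintro ⟨-, h2⟩ j hj
    obtain ⟨i, -, rfl⟩ := mem_map.mp (h2 j hj)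
    simp only [Function.Embedding.coeFn_mk]
    omega
  · intro hall
    refine ⟨fun j => trivial, fun j hj => ?_⟩
    obtain ⟨c, hc⟩ := hall j hj
    have hj1 : 0 < j := p.parts_pos hj
    have hj2 : j ≤ n := by
      simpa [p.parts_sum] using Multiset.single_le_sum (fun _ _ => Nat.zero_le _) _ hj
    simp only [mem_map, mem_range, Function.Embedding.coeFn_mk]
    exact ⟨c - 1, by omega, by omega⟩

/-- doubling each part gives partitions of `2m` into even parts. -/
def doubleEquiv (m : ℕ) :
    Nat.Partition m ≃ {p : Nat.Partition (2*m) // ∀ j ∈ p.parts, 2 ∣ j} where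
  toFun p := ⟨⟨p.parts.map (fun x => 2*x),
      fun {j} hj => by
        obtain ⟨x, hx, rfl⟩ := Multiset.mem_map.mp hj
        have := p.parts_pos hx
        omega,
      by
        rw [show (fun x => 2*x) = (fun x => 2 * (fun y => y) x) from rfl,
          Multiset.sum_map_mul_left]
        simp [p.parts_sum]⟩,
      fun j hj => by
        obtain ⟨x, hx, rfl⟩ := Multiset.mem_map.mp hj
        exact ⟨x, rfl⟩⟩
  invFun q := ⟨q.1.parts.map (fun x => x/2),
      fun {j} hj => by
        obtain ⟨x, hx, rfl⟩ := Multiset.mem_map.mp hj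
        have h1 := q.1.parts_pos hx
        obtain ⟨c, hc⟩ := q.2 x hx
        omega,
      by
        have hmm : q.1.parts.map (fun x => 2 * (x / 2)) = q.1.parts.map (fun x => x) := by
          apply Multiset.map_congr rfl
          intro x hx
          obtain ⟨c, hc⟩ := q.2 x hx
          omega
        have h2 : 2 * (q.1.parts.map (fun x => x/2)).sum = 2 * m := by
          rw [← Multiset.sum_map_mul_left, hmm]
          simp [q.1.parts_sum]
        omega⟩
  left_inv p := by
    apply Nat.Partition.ext
    simp only [Multiset.map_map, Function.comp]
    rw [show (fun x => 2 * x / 2) = (fun x : ℕ => x) from funext fun x => by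
      show 2 * x / 2 = x; omega]
    simp
  right_inv q := by
    apply Subtype.ext
    apply Nat.Partition.ext
    simp only [Multiset.map_map, Function.comp]
    rw [Multiset.map_congr rfl (fun x hx => by
      obtain ⟨c, hc⟩ := q.2 x hx
      show 2 * (x / 2) = x
      omega : ∀ x ∈ q.1.parts, 2 * (x / 2) = (fun y : ℕ => y) x)]
    simp

lemma card_even_partitions (n : ℕ) :
    Nat.card {p : Nat.Partition n // ∀ j ∈ p.parts, 2 ∣ j}
      = if 2 ∣ n then partitionNumber (n/2) else 0 := by
  split_ifs with h
  · obtain ⟨m, rfl⟩ := h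
    rw [show 2*m/2 = m from by omega, ← Nat.card_congr (doubleEquiv m), partitionNumber]
  · have : IsEmpty {p : Nat.Partition n // ∀ j ∈ p.parts, 2 ∣ j} := by
      constructor
      rintro ⟨p, hp⟩
      exact h (p.parts_sum ▸ Multiset.dvd_sum hp)
    simp [Nat.card_of_isEmpty]

/-- bipartition numbers are the convolution of partition numbers. -/
def bipartEquiv (n : ℕ) :
    {x : (Σ a : ℕ, Nat.Partition a) × (Σ b : ℕ, Nat.Partition b) // x.1.1 + x.2.1 = n}
      ≃ Σ ij : (antidiagonal n : Finset (ℕ×ℕ)),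
        (Nat.Partition (ij:ℕ×ℕ).1 × Nat.Partition (ij:ℕ×ℕ).2) where
  toFun x := ⟨⟨(x.1.1.1, x.1.2.1), mem_antidiagonal.mpr x.2⟩, (x.1.1.2, x.1.2.2)⟩
  invFun y := ⟨⟨⟨y.1.1.1, y.2.1⟩, ⟨y.1.1.2, y.2.2⟩⟩, mem_antidiagonal.mp y.1.2⟩
  left_inv x := rfl
  right_inv y := rfl

theorem bipartitionNumber_eq_sum (n : ℕ) :
    bipartitionNumber n = ∑ ij ∈ antidiagonal n, partitionNumber ij.1 * partitionNumber ij.2 := by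
  rw [bipartitionNumber]
  rw [Nat.card_congr (bipartEquiv n), Nat.card_eq_fintype_card, Fintype.card_sigma,
    ← Finset.sum_attach (antidiagonal n)
      (fun ij => partitionNumber ij.1 * partitionNumber ij.2)]
  rw [Finset.univ_eq_attach]
  apply Finset.sum_congr rfl
  intro ij _
  rw [Fintype.card_prod, partitionNumber, partitionNumber,
    Nat.card_eq_fintype_card, Nat.card_eq_fintype_card]

end PartA

noncomputable section GaussCore

abbrev R := PowerSeries ℚ

/-- partial product `∏ (1 - X^(2i+2))`, the even-parts Euler product. -/
def P2 (a : ℕ) : R := ∏ i ∈ range a, (1 - X ^ (2 * i + 2))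

lemma P2_zero : P2 0 = 1 := rfl

lemma P2_succ (a : ℕ) : P2 (a + 1) = P2 a * (1 - X ^ (2 * a + 2)) := prod_range_succ _ _

lemma constantCoeff_P2 (a : ℕ) : constantCoeff (P2 a) = 1 := by
  induction a with
  | zero => simp [P2_zero]
  | succ a ih => rw [P2_succ, map_mul, ih, map_sub, map_one, map_pow, constantCoeff_X]; simp

lemma isUnit_P2 (a : ℕ) : IsUnit (P2 a) := by
  rw [PowerSeries.isUnit_iff_constantCoeff, constantCoeff_P2]; exact isUnit_one

/-- Gaussian binomial (in `q = X^2`) defined by the Pascal recursion. -/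
def gb : ℕ → ℕ → R
  | _, 0 => 1
  | 0, _ + 1 => 0
  | n + 1, k + 1 => gb n (k + 1) + X ^ (2 * (n - k)) * gb n k

lemma gb_zero_right (n : ℕ) : gb n 0 = 1 := by cases n <;> rfl

lemma gb_eq_zero : ∀ {n k : ℕ}, n < k → gb n k = 0
  | 0, _ + 1, _ => rfl
  | n + 1, k + 1, h => by
    rw [gb, gb_eq_zero (by omega), gb_eq_zero (by omega), mul_zero, add_zero]

lemma gb_succ_succ (n k : ℕ) :
    gb (n + 1) (k + 1) = gb n (k + 1) + X ^ (2 * (n - k)) * gb n k := rfl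

lemma gb_self (n : ℕ) : gb n n = 1 := by
  induction n with
  | zero => rfl
  | succ n ih => rw [gb_succ_succ, gb_eq_zero (by omega), Nat.sub_self, ih]; simp

/-- key product identity : `gb n k * P2 k * P2 (n-k) = P2 n` for `k ≤ n`. -/
lemma gb_mul_P2 : ∀ n k : ℕ, k ≤ n → gb n k * P2 k * P2 (n - k) = P2 n := by
  intro n
  induction n with
  | zero => intro k hk; interval_cases k; simp [gb_zero_right, P2_zero]
  | succ n ih =>
    intro k hk
    rcases Nat.eq_zero_or_pos k with rfl | hk0
    · simp [gb_zero_right, P2_zero]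
    rcases eq_or_lt_of_le hk with rfl | hlt
    · simp [gb_self, P2_zero]
    obtain ⟨j, rfl⟩ : ∃ j, k = j + 1 := ⟨k - 1, by omega⟩
    have hj : j + 1 ≤ n := by omega
    have e1 : n + 1 - (j + 1) = (n - (j + 1)) + 1 := by omega
    have e2 : n - j = (n - (j + 1)) + 1 := by omega
    have hexp : (X:R) ^ (2 * (n - j)) * X ^ (2 * j + 2) = X ^ (2 * n + 2) := by
      rw [← pow_add]; congr 1; omega
    have hexp2 : (2 : ℕ) * (n - (j+1)) + 2 = 2 * (n - j) := by omega
    have key1 := ih (j + 1) hj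
    have key2 := ih j (by omega)
    have hP := P2_succ j
    rw [e2, P2_succ, hexp2] at key2
    rw [gb_succ_succ, e1, P2_succ (n - (j+1)), hexp2, P2_succ n]
    linear_combination (1 - X^(2*(n-j))) * key1 + X^(2*(n-j)) * (1 - X^(2*j+2)) * key2
      + X^(2*(n-j)) * gb n j * P2 (n - (j+1)) * (1 - X^(2*(n-j))) * hP - P2 n * hexp



/-- The second Pascal recursion. -/
lemma gb_succ_succ' (n k : ℕ) :
    gb (n + 1) (k + 1) = X ^ (2 * (k + 1)) * gb n (k + 1) + gb n k := by
  rcases lt_trichotomy n k with h | rfl | h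
  · rw [gb_eq_zero (by omega), gb_eq_zero (by omega), gb_eq_zero (by omega)]; simp
  · rw [gb_self, gb_eq_zero (by omega), gb_self]; simp
  · have hne : P2 (k + 1) * P2 (n - k) ≠ 0 :=
      ((isUnit_P2 _).mul (isUnit_P2 _)).ne_zero
    apply mul_right_cancel₀ hne
    have u1 : gb (n+1) (k+1) * P2 (k+1) * P2 (n - k) = P2 (n+1) := by
      have := gb_mul_P2 (n+1) (k+1) (by omega)
      rwa [show n + 1 - (k+1) = n - k by omega] at this
    have u2 : gb n (k+1) * P2 (k+1) * P2 (n - (k+1)) = P2 n := gb_mul_P2 n (k+1) (by omega)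
    have u3 : gb n k * P2 k * P2 (n - k) = P2 n := gb_mul_P2 n k (by omega)
    have hP2a : P2 (k+1) = P2 k * (1 - X ^ (2*k+2)) := P2_succ k
    have hP2b : P2 (n - k) = P2 (n - (k+1)) * (1 - X ^ (2*(n-k))) := by
      have h1 : n - k = (n - (k+1)) + 1 := by omega
      rw [h1, P2_succ, show 2*(n-(k+1))+2 = 2*(n-(k+1)+1) by omega]
    have hexp : (X:R) ^ (2*(k+1)) * X ^ (2*(n-k)) = X ^ (2*(n+1)) := by
      rw [← pow_add]; congr 1; omega
    have hPn : P2 (n+1) = P2 n * (1 - X ^ (2*n+2)) := P2_succ n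
    have hPn' : P2 (n+1) = P2 n * (1 - X ^ (2*(n+1))) := by
      rw [hPn, show 2*(n+1) = 2*n+2 by omega]
    rw [← mul_assoc, u1, hPn']
    linear_combination (-(X:R)^(2*(k+1)) * (1 - X^(2*(n-k)))) * u2 - (1 - X^(2*k+2)) * u3
      - (X:R)^(2*(k+1)) * gb n (k+1) * P2 (k+1) * hP2b - gb n k * P2 (n-k) * hP2a
      + P2 n * hexp

/-- the key double-step recursion. -/
lemma gb_combo (m t : ℕ) :
    gb (2*m+2) (t+2) = X ^ (2*(t+2)) * gb (2*m) (t+2)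
      + (1 + X ^ (2*(2*m+1))) * gb (2*m) (t+1) + X ^ (2*(2*m-t)) * gb (2*m) t := by
  rcases le_or_gt t (2*m) with h | h
  · have h1 : gb (2*m+1+1) (t+1+1) = gb (2*m+1) (t+1+1)
        + X ^ (2*(2*m+1-(t+1))) * gb (2*m+1) (t+1) := gb_succ_succ _ _
    rw [show 2*m+1-(t+1) = 2*m-t by omega] at h1
    have h2 := gb_succ_succ' (2*m) (t+1)
    have h3 := gb_succ_succ' (2*m) t
    have hexp : (X:R) ^ (2*(2*m-t)) * X ^ (2*(t+1)) = X ^ (2*(2*m+1)) := by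
      rw [← pow_add]; congr 1; omega
    calc gb (2*m+2) (t+2) = gb (2*m+1) (t+2) + X ^ (2*(2*m-t)) * gb (2*m+1) (t+1) := h1
    _ = _ := by rw [h2, h3]; linear_combination gb (2*m) (t+1) * hexp
  · rw [gb_eq_zero (by omega), gb_eq_zero (by omega), gb_eq_zero (by omega),
      gb_eq_zero (by omega)]
    simp

/-- `gb` with integer index, zero for negative index. -/
def G2 (n : ℕ) (k : ℤ) : R := if 0 ≤ k then gb n k.toNat else 0

lemma G2_neg (n : ℕ) (k : ℤ) (h : k < 0) : G2 n k = 0 := by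
  rw [G2, if_neg (by omega)]

lemma G2_ofNat (n t : ℕ) : G2 n t = gb n t := by
  rw [G2, if_pos (by positivity), Int.toNat_natCast]

lemma G2_eq_zero_of_gt {n : ℕ} {k : ℤ} (h : (n:ℤ) < k) : G2 n k = 0 := by
  rw [G2]
  split_ifs with hh
  · rw [gb_eq_zero (by omega)]
  · rfl

/-- the double-step recursion, integer-indexed, valid for all `t`. -/
lemma G2_combo (m : ℕ) (t : ℤ) :
    G2 (2*m+2) t = X ^ (2*t.toNat) * G2 (2*m) t
      + (1 + X ^ (2*(2*m+1))) * G2 (2*m) (t-1) + X ^ (2*(2*m+2-t).toNat) * G2 (2*m) (t-2) := by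
  rcases lt_trichotomy t 0 with h | rfl | h
  · rw [G2_neg _ _ h, G2_neg _ _ (by omega), G2_neg _ _ (by omega), G2_neg _ _ (by omega)]; simp
  · rw [show (0:ℤ)-1 = -1 by ring, show (0:ℤ)-2 = -2 by ring,
      G2_neg (2*m) (-1) (by norm_num), G2_neg (2*m) (-2) (by norm_num)]
    simp [G2, gb_zero_right]
  rcases eq_or_lt_of_le (by omega : (1:ℤ) ≤ t) with rfl | h1
  · rw [show (1:ℤ)-1 = 0 by ring, show (1:ℤ)-2 = -1 by ring, G2_neg (2*m) (-1) (by norm_num)]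
    have e1 : G2 (2*m+2) 1 = gb (2*m+2) 1 := by simp [G2]
    have e2 : G2 (2*m) 1 = gb (2*m) 1 := by simp [G2]
    have e3 : G2 (2*m) 0 = 1 := by simp [G2, gb_zero_right]
    rw [e1, e2, e3, show Int.toNat 1 = 1 by rfl]
    have h1 : gb (2*m+1+1) (0+1) = gb (2*m+1) (0+1)
        + X ^ (2*(2*m+1-0)) * gb (2*m+1) 0 := gb_succ_succ _ _
    have h2 : gb (2*m+1) (0+1) = X ^ (2*(0+1)) * gb (2*m) (0+1) + gb (2*m) 0 :=
      gb_succ_succ' _ _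
    norm_num [gb_zero_right] at h1 h2
    rw [show (2*m+1+1) = 2*m+2 by omega] at h1
    rw [h1, h2]
    ring
  · obtain ⟨s, rfl⟩ : ∃ s : ℕ, t = (s:ℤ) + 2 := ⟨(t-2).toNat, by omega⟩
    rw [show ((s:ℤ)+2) - 1 = ((s+1:ℕ):ℤ) by push_cast; ring,
      show ((s:ℤ)+2) - 2 = (s:ℤ) by ring]
    rw [show ((s:ℤ)+2) = ((s+2:ℕ):ℤ) by push_cast; ring, G2_ofNat, G2_ofNat, G2_ofNat,
      G2_ofNat, Int.toNat_natCast]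
    rcases le_or_gt s (2*m) with hs | hs
    · rw [show (2*(m:ℤ)+2-((s+2:ℕ):ℤ)).toNat = 2*m-s by omega]
      exact gb_combo m s
    · rw [gb_eq_zero (by omega), gb_eq_zero (by omega), gb_eq_zero (by omega),
        gb_eq_zero (by omega)]
      simp

/-- sign flip of `(-1)^natAbs` under shifting by one. -/
lemma neg_one_pow_natAbs_sub_one {α : Type*} [Monoid α] [HasDistribNeg α] (j : ℤ) :
    ((-1:α)) ^ (j-1).natAbs = -(-1) ^ j.natAbs := by
  rcases Int.even_or_odd j with h | h
  · rw [(Int.natAbs_even.mpr h).neg_one_pow,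
      (Int.natAbs_odd.mpr (by exact h.sub_odd odd_one)).neg_one_pow]
    try norm_num
  · rw [(Int.natAbs_odd.mpr h).neg_one_pow,
      (Int.natAbs_even.mpr (by exact h.sub_odd odd_one)).neg_one_pow]
    try norm_num

lemma neg_one_pow_natAbs_add_one {α : Type*} [Monoid α] [HasDistribNeg α] (j : ℤ) :
    ((-1:α)) ^ (j+1).natAbs = -(-1) ^ j.natAbs := by
  have h := neg_one_pow_natAbs_sub_one (α := α) (j+1)
  rw [add_sub_cancel_right] at h
  rw [h, neg_neg]

/-- odd-parts Euler product `∏ (1 - X^(2i+1))`. -/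
def EO (a : ℕ) : R := ∏ i ∈ range a, (1 - X ^ (2*i+1))

lemma EO_succ (a : ℕ) : EO (a+1) = EO a * (1 - X ^ (2*a+1)) := prod_range_succ _ _

/-- the (finite) Gauss sum. -/
def gSum (m : ℕ) : R :=
  ∑ k ∈ Finset.Icc (-(m:ℤ)) (m:ℤ), (-1:R)^k.natAbs * G2 (2*m) ((m:ℤ)+k) * X^(k.natAbs^2)

lemma gSum_ext (m M : ℕ) (h : m ≤ M) :
    ∑ k ∈ Finset.Icc (-(M:ℤ)) (M:ℤ), (-1:R)^k.natAbs * G2 (2*m) ((m:ℤ)+k) * X^(k.natAbs^2)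
      = gSum m := by
  rw [gSum]
  apply (Finset.sum_subset (by intro x hx; simp only [Finset.mem_Icc] at *; omega) _).symm
  intro k hk hk2
  simp only [Finset.mem_Icc] at hk hk2
  rcases lt_or_ge ((m:ℤ)+k) 0 with hh | hh
  · rw [G2_neg _ _ hh]; ring
  · rw [G2_eq_zero_of_gt (by push_cast; omega)]; ring

theorem gSum_eq (m : ℕ) : gSum m = EO m ^ 2 := by
  induction m with
  | zero =>
    rw [gSum]
    norm_num [EO]
    rw [show G2 0 0 = gb 0 0 from by simp [G2], gb_zero_right]
    try norm_num
  | succ m ih =>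
    have castm : ((m+1:ℕ):ℤ) = (m:ℤ)+1 := by push_cast; ring
    -- expand each term via the double-step recursion
    have key : ∀ k ∈ Finset.Icc (-((m:ℤ)+1)) ((m:ℤ)+1),
        (-1:R)^k.natAbs * G2 (2*m+2) (((m:ℤ)+1)+k) * X^(k.natAbs^2)
        = ((-1:R)^k.natAbs * (X ^ (2*(((m:ℤ)+1)+k).toNat) * G2 (2*m) (((m:ℤ)+1)+k))
            * X^(k.natAbs^2))
        + ((1 + X ^ (2*(2*m+1))) * ((-1:R)^k.natAbs * G2 (2*m) ((m:ℤ)+k) * X^(k.natAbs^2)))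
        + ((-1:R)^k.natAbs * (X ^ (2*(2*(m:ℤ)+2-(((m:ℤ)+1)+k)).toNat)
            * G2 (2*m) (((m:ℤ)-1)+k)) * X^(k.natAbs^2)) := by
      intro k hk
      have hc := G2_combo m (((m:ℤ)+1)+k)
      rw [show ((m:ℤ)+1)+k-1 = (m:ℤ)+k by ring,
        show ((m:ℤ)+1)+k-2 = ((m:ℤ)-1)+k by ring] at hc
      rw [hc]
      push_cast
      ring
    have expand : gSum (m+1) =
        (∑ k ∈ Finset.Icc (-((m:ℤ)+1)) ((m:ℤ)+1),
          (-1:R)^k.natAbs * (X ^ (2*(((m:ℤ)+1)+k).toNat) * G2 (2*m) (((m:ℤ)+1)+k))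
            * X^(k.natAbs^2))
        + (∑ k ∈ Finset.Icc (-((m:ℤ)+1)) ((m:ℤ)+1),
          (1 + X ^ (2*(2*m+1))) * ((-1:R)^k.natAbs * G2 (2*m) ((m:ℤ)+k) * X^(k.natAbs^2)))
        + (∑ k ∈ Finset.Icc (-((m:ℤ)+1)) ((m:ℤ)+1),
          (-1:R)^k.natAbs * (X ^ (2*(2*(m:ℤ)+2-(((m:ℤ)+1)+k)).toNat)
            * G2 (2*m) (((m:ℤ)-1)+k)) * X^(k.natAbs^2)) := by
      rw [gSum, show 2*(m+1) = 2*m+2 by ring, castm, ← Finset.sum_add_distrib,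
        ← Finset.sum_add_distrib]
      exact Finset.sum_congr rfl key
    -- middle sum
    have hB : (∑ k ∈ Finset.Icc (-((m:ℤ)+1)) ((m:ℤ)+1),
          (1 + X ^ (2*(2*m+1))) * ((-1:R)^k.natAbs * G2 (2*m) ((m:ℤ)+k) * X^(k.natAbs^2)))
        = (1 + X ^ (2*(2*m+1))) * gSum m := by
      rw [← Finset.mul_sum, ← castm]
      rw [gSum_ext m (m+1) (by omega)]
    -- first sum
    have hA : (∑ k ∈ Finset.Icc (-((m:ℤ)+1)) ((m:ℤ)+1),
          (-1:R)^k.natAbs * (X ^ (2*(((m:ℤ)+1)+k).toNat) * G2 (2*m) (((m:ℤ)+1)+k))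
            * X^(k.natAbs^2))
        = -(X ^ (2*m+1) * gSum m) := by
      have hsub : Finset.Icc (-((m:ℤ)+1)) ((m:ℤ)-1) ⊆ Finset.Icc (-((m:ℤ)+1)) ((m:ℤ)+1) := by
        intro x hx; simp only [Finset.mem_Icc] at *; omega
      rw [← Finset.sum_subset hsub ?hzero]
      case hzero =>
        intro k hk hk2
        simp only [Finset.mem_Icc] at hk hk2
        rw [G2_eq_zero_of_gt (by push_cast; omega)]
        ring
      · have hmap : Finset.Icc (-((m:ℤ)+1)) ((m:ℤ)-1)
            = (Finset.Icc (-(m:ℤ)) (m:ℤ)).map (addRightEmbedding (-1)) := by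
          rw [map_add_right_Icc]; congr 1 <;> ring
        rw [hmap, Finset.sum_map, gSum, Finset.mul_sum, ← Finset.sum_neg_distrib]
        apply Finset.sum_congr rfl
        intro j hj
        simp only [Finset.mem_Icc] at hj
        have emb : addRightEmbedding (-1:ℤ) j = j - 1 := by
          simp [addRightEmbedding]; ring
        rw [emb, show ((m:ℤ)+1)+(j-1) = (m:ℤ)+j by ring, neg_one_pow_natAbs_sub_one]
        have hexpn : 2*((m:ℤ)+j).toNat + (j-1).natAbs^2 = (2*m+1) + j.natAbs^2 := by
          have h1 : ((((m:ℤ)+j).toNat : ℤ)) = (m:ℤ)+j := Int.toNat_of_nonneg (by omega)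
          have : (2*(((m:ℤ)+j).toNat:ℤ)) + ((j-1).natAbs:ℤ)^2
              = (2*(m:ℤ)+1) + ((j.natAbs:ℤ))^2 := by
            rw [h1, Int.natAbs_sq, Int.natAbs_sq]; ring
          exact_mod_cast this
        have hexp : (X:R) ^ (2*((m:ℤ)+j).toNat) * X ^ ((j-1).natAbs^2)
            = X ^ (2*m+1) * X ^ (j.natAbs^2) := by
          rw [← pow_add, ← pow_add, hexpn]
        linear_combination (-((-1:R)^j.natAbs) * G2 (2*m) ((m:ℤ)+j)) * hexp
    -- third sum
    have hC : (∑ k ∈ Finset.Icc (-((m:ℤ)+1)) ((m:ℤ)+1),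
          (-1:R)^k.natAbs * (X ^ (2*(2*(m:ℤ)+2-(((m:ℤ)+1)+k)).toNat)
            * G2 (2*m) (((m:ℤ)-1)+k)) * X^(k.natAbs^2))
        = -(X ^ (2*m+1) * gSum m) := by
      have hsub : Finset.Icc (-(m:ℤ)+1) ((m:ℤ)+1) ⊆ Finset.Icc (-((m:ℤ)+1)) ((m:ℤ)+1) := by
        intro x hx; simp only [Finset.mem_Icc] at *; omega
      rw [← Finset.sum_subset hsub ?hzero2]
      case hzero2 =>
        intro k hk hk2
        simp only [Finset.mem_Icc] at hk hk2
        rw [G2_neg _ _ (by omega)]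
        ring
      · have hmap : Finset.Icc (-(m:ℤ)+1) ((m:ℤ)+1)
            = (Finset.Icc (-(m:ℤ)) (m:ℤ)).map (addRightEmbedding 1) := by
          rw [map_add_right_Icc]
        rw [hmap, Finset.sum_map, gSum, Finset.mul_sum, ← Finset.sum_neg_distrib]
        apply Finset.sum_congr rfl
        intro j hj
        simp only [Finset.mem_Icc] at hj
        have emb : addRightEmbedding (1:ℤ) j = j + 1 := rfl
        rw [emb, show ((m:ℤ)-1)+(j+1) = (m:ℤ)+j by ring, neg_one_pow_natAbs_add_one,
          show 2*(m:ℤ)+2-(((m:ℤ)+1)+(j+1)) = (m:ℤ)-j by ring]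
        have hexpn : 2*((m:ℤ)-j).toNat + (j+1).natAbs^2 = (2*m+1) + j.natAbs^2 := by
          have h1 : ((((m:ℤ)-j).toNat : ℤ)) = (m:ℤ)-j := Int.toNat_of_nonneg (by omega)
          have : (2*(((m:ℤ)-j).toNat:ℤ)) + ((j+1).natAbs:ℤ)^2
              = (2*(m:ℤ)+1) + ((j.natAbs:ℤ))^2 := by
            rw [h1, Int.natAbs_sq, Int.natAbs_sq]; ring
          exact_mod_cast this
        have hexp : (X:R) ^ (2*((m:ℤ)-j).toNat) * X ^ ((j+1).natAbs^2)
            = X ^ (2*m+1) * X ^ (j.natAbs^2) := by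
          rw [← pow_add, ← pow_add, hexpn]
        linear_combination (-((-1:R)^j.natAbs) * G2 (2*m) ((m:ℤ)+j)) * hexp
    rw [expand, hA, hB, hC, ih, EO_succ]
    ring

end GaussCore

noncomputable section Glue
open scoped Classical

def Ee (a : ℕ) : R := ∏ i ∈ range a, (1 - X ^ (i+1))
def Fp (a : ℕ) : R := ∏ i ∈ range a, (1 - X ^ (i+1) : R)⁻¹
def F2p (a : ℕ) : R := ∏ i ∈ range a, (1 - X ^ (2*i+2) : R)⁻¹

lemma Ee_mul_Fp (a : ℕ) : Ee a * Fp a = 1 := by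
  rw [Ee, Fp, ← Finset.prod_mul_distrib]
  apply Finset.prod_eq_one
  intro i _
  apply PowerSeries.mul_inv_cancel
  simp

lemma P2_mul_F2p (a : ℕ) : P2 a * F2p a = 1 := by
  rw [P2, F2p, ← Finset.prod_mul_distrib]
  apply Finset.prod_eq_one
  intro i _
  apply PowerSeries.mul_inv_cancel
  simp

lemma Ee_split (M : ℕ) : Ee (2*M) = EO M * P2 M := by
  induction M with
  | zero => simp [Ee, EO, P2]
  | succ M ih =>
    rw [show 2*(M+1) = 2*M+1+1 by ring, Ee, prod_range_succ, prod_range_succ, ← Ee, ih,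
      EO_succ, P2_succ]
    ring_nf

lemma P2_factor {b c : ℕ} (h : b ≤ c) :
    ∃ D : R, P2 c = P2 b * D ∧ (X:R)^(2*b+2) ∣ D - 1 := by
  obtain ⟨d, rfl⟩ := Nat.exists_eq_add_of_le h
  induction d with
  | zero => exact ⟨1, by simp, by simp⟩
  | succ d ih =>
    obtain ⟨D, hD, hdvd⟩ := ih (by omega)
    refine ⟨D * (1 - X^(2*(b+d)+2)), ?_, ?_⟩
    · rw [show b + (d+1) = (b+d)+1 by ring, P2_succ, hD]; ring
    · have he : D * (1 - X^(2*(b+d)+2)) - 1 = (D - 1) - D * X^(2*(b+d)+2) := by ring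
      rw [he]
      exact dvd_sub hdvd ((pow_dvd_pow (X:R) (by omega)).mul_left D)

lemma mul_sub_one_dvd {c : ℕ} {A B : R} (hA : (X:R)^c ∣ A - 1) (hB : (X:R)^c ∣ B - 1) :
    (X:R)^c ∣ A*B - 1 := by
  have he : A*B - 1 = (A-1)*B + (B-1) := by ring
  rw [he]
  exact dvd_add (hA.mul_right B) hB

lemma key_term_dvd (n : ℕ) (k : ℤ) (hk : k ∈ Finset.Icc (-((n+1:ℕ):ℤ)) ((n+1:ℕ):ℤ)) :
    (X:R)^(n+1) ∣ X^(k.natAbs^2) *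
      (P2 (2*(n+1)) - G2 (2*(n+1)) (((n+1:ℕ):ℤ)+k) * P2 (n+1)^2) := by
  simp only [Finset.mem_Icc] at hk
  set M := n + 1 with hM
  set a := k.natAbs with ha
  have hka : a ≤ M := by omega
  rcases le_or_gt (n+1) (a^2) with hbig | hsmall
  · exact Dvd.dvd.mul_right (pow_dvd_pow (X:R) hbig) _
  -- small case : a² ≤ n
  have han : a ≤ n := by nlinarith
  have hpos : (0:ℤ) ≤ (M:ℤ) + k := by omega
  have hG : G2 (2*M) ((M:ℤ)+k) = gb (2*M) ((M:ℤ)+k).toNat := by rw [G2, if_pos hpos]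
  set u := ((M:ℤ)+k).toNat with hu
  have hu2M : u ≤ 2*M := by omega
  have hgb := gb_mul_P2 (2*M) u hu2M
  set w := M - a with hw
  have hwu : w ≤ u := by omega
  have hwv : w ≤ 2*M - u := by omega
  have hwM : w ≤ M := by omega
  obtain ⟨D1, hD1, hd1⟩ := P2_factor hwu
  obtain ⟨D2, hD2, hd2⟩ := P2_factor hwv
  obtain ⟨D3, hD3, hd3⟩ := P2_factor hwM
  have hdiff : P2 (2*M) - gb (2*M) u * P2 M^2
      = gb (2*M) u * P2 w^2 * (D1*D2 - D3*D3) := by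
    linear_combination (-1 : R) * hgb + gb (2*M) u * P2 (2*M - u) * hD1
      + gb (2*M) u * P2 w * D1 * hD2
      - gb (2*M) u * (P2 M + P2 w * D3) * hD3
  obtain ⟨E, hE⟩ := dvd_sub (mul_sub_one_dvd hd1 hd2) (mul_sub_one_dvd hd3 hd3)
  have hEE : D1*D2 - D3*D3 = X^(2*w+2) * E := by
    have : D1*D2 - D3*D3 = (D1*D2 - 1) - (D3*D3 - 1) := by ring
    rw [this, hE]
  rw [hG, hdiff, hEE]
  have hexp : a^2 + (2*w+2) ≥ n+1 := by
    have haa : a ≤ a^2 := Nat.le_self_pow two_ne_zero a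
    generalize hb : a^2 = b at haa hsmall ⊢
    omega
  calc (X:R)^(n+1) ∣ X^(a^2 + (2*w+2)) := pow_dvd_pow _ hexp
  _ = X^(a^2) * X^(2*w+2) := by rw [pow_add]
  _ ∣ X^(a^2) * (gb (2*M) u * P2 w^2 * (X^(2*w+2) * E)) :=
      mul_dvd_mul_left _ ⟨gb (2*M) u * P2 w^2 * E, by ring⟩
  _ = _ := by ring

lemma core_dvd (n : ℕ) :
    (X:R)^(n+1) ∣ (∑ k ∈ Finset.Icc (-((n+1:ℕ):ℤ)) ((n+1:ℕ):ℤ),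
        (-1:R)^k.natAbs * X^(k.natAbs^2)) * P2 (2*(n+1)) - Ee (2*(n+1))^2 := by
  have h1 : Ee (2*(n+1))^2 = gSum (n+1) * P2 (n+1)^2 := by
    rw [Ee_split, mul_pow, gSum_eq]
  rw [h1, gSum, Finset.sum_mul, Finset.sum_mul, ← Finset.sum_sub_distrib]
  apply Finset.dvd_sum
  intro k hk
  have hkey := key_term_dvd n k hk
  have he : (-1:R)^k.natAbs * X^(k.natAbs^2) * P2 (2*(n+1))
      - (-1:R)^k.natAbs * G2 (2*(n+1)) (((n+1:ℕ):ℤ)+k) * X^(k.natAbs^2) * P2 (n+1)^2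
      = (-1:R)^k.natAbs * (X^(k.natAbs^2) *
        (P2 (2*(n+1)) - G2 (2*(n+1)) (((n+1:ℕ):ℤ)+k) * P2 (n+1)^2)) := by ring
  rw [he]
  exact hkey.mul_left _

lemma full_dvd (n : ℕ) :
    (X:R)^(n+1) ∣ (∑ k ∈ Finset.Icc (-((n+1:ℕ):ℤ)) ((n+1:ℕ):ℤ),
        (-1:R)^k.natAbs * X^(k.natAbs^2)) * Fp (2*(n+1))^2 - F2p (2*(n+1)) := by
  set TN := ∑ k ∈ Finset.Icc (-((n+1:ℕ):ℤ)) ((n+1:ℕ):ℤ),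
      (-1:R)^k.natAbs * X^(k.natAbs^2) with hTN
  set L := 2*(n+1) with hL
  have h1 := Ee_mul_Fp L
  have h2 := P2_mul_F2p L
  have key : TN * Fp L^2 - F2p L = (TN * P2 L - Ee L^2) * (Fp L^2 * F2p L) := by
    linear_combination (-(TN * Fp L^2)) * h2 + (F2p L * (Ee L * Fp L + 1)) * h1
  rw [key]
  exact (core_dvd n).mul_right _

lemma coeff_Fp_sq (L j n : ℕ) (hj : j ≤ n) (hL : n ≤ L) :
    coeff (R := ℚ) j (Fp L ^ 2) = bipartitionNumber j := by
  rw [sq, coeff_mul, bipartitionNumber_eq_sum]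
  push_cast
  apply Finset.sum_congr rfl
  intro ij hij
  rw [HasAntidiagonal.mem_antidiagonal] at hij
  rw [Fp, coeff_Fp L ij.1 (by omega), coeff_Fp L ij.2 (by omega)]

lemma bZ_cast (n : ℕ) (k : ℤ) :
    ((bipartitionNumberZ ((n:ℤ) - k^2) : ℤ) : ℚ)
      = if k.natAbs^2 ≤ n then (bipartitionNumber (n - k.natAbs^2) : ℚ) else 0 := by
  have hsq : (k:ℤ)^2 = ((k.natAbs^2 : ℕ) : ℤ) := by
    rw [← Int.natAbs_sq]
    push_cast
    ring
  rw [bipartitionNumberZ, hsq]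
  split_ifs with h1 h2 h2
  · have harg : ((n:ℤ) - ((k.natAbs^2 : ℕ):ℤ)).toNat = n - k.natAbs^2 := by omega
    rw [harg]
    push_cast
    ring
  · exfalso; omega
  · exfalso; omega
  · rfl

/-- the `ℚ`-coefficient identity. -/
lemma main_q (n : ℕ) :
    ∑ k ∈ Finset.Icc (-((n+1:ℕ):ℤ)) ((n+1:ℕ):ℤ),
        (-1:ℚ)^k.natAbs * ((bipartitionNumberZ ((n:ℤ) - k^2) : ℤ) : ℚ)
      = if 2 ∣ n then (partitionNumber (n/2) : ℚ) else 0 := by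
  set L := 2*(n+1) with hL
  have hco : coeff n ((∑ k ∈ Finset.Icc (-((n+1:ℕ):ℤ)) ((n+1:ℕ):ℤ),
      (-1:R)^k.natAbs * X^(k.natAbs^2)) * Fp L^2) = coeff n (F2p L) := by
    have := (PowerSeries.X_pow_dvd_iff.mp (full_dvd n)) n (by omega)
    rw [map_sub] at this
    linarith [this]
  -- right side
  have hrhs : coeff n (F2p L) = if 2 ∣ n then (partitionNumber (n/2) : ℚ) else 0 := by
    rw [F2p, coeff_F2p L n (by omega), card_even_partitions]
    split_ifs <;> simp
  -- left side
  have hlhs : coeff n ((∑ k ∈ Finset.Icc (-((n+1:ℕ):ℤ)) ((n+1:ℕ):ℤ),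
      (-1:R)^k.natAbs * X^(k.natAbs^2)) * Fp L^2)
      = ∑ k ∈ Finset.Icc (-((n+1:ℕ):ℤ)) ((n+1:ℕ):ℤ),
        (-1:ℚ)^k.natAbs * ((bipartitionNumberZ ((n:ℤ) - k^2) : ℤ) : ℚ) := by
    rw [Finset.sum_mul, map_sum]
    apply Finset.sum_congr rfl
    intro k hk
    have hC : ((-1:R))^k.natAbs = C ((-1:ℚ)^k.natAbs) := by
      rw [map_pow, map_neg, map_one]
    rw [mul_assoc, hC, coeff_C_mul, coeff_X_pow_mul', bZ_cast]
    split_ifs with h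
    · rw [coeff_Fp_sq L (n - k.natAbs^2) n (by omega) (by omega)]
    · ring
  rw [← hlhs, hco, hrhs]

lemma restrict_sum (n : ℕ) :
    ∑ k ∈ Finset.Icc (-((n+1:ℕ):ℤ)) ((n+1:ℕ):ℤ),
        (-1:ℚ)^k.natAbs * ((bipartitionNumberZ ((n:ℤ) - k^2) : ℤ) : ℚ)
      = ∑ k ∈ Finset.Icc (-(n:ℤ)) (n:ℤ),
        (-1:ℚ)^k.natAbs * ((bipartitionNumberZ ((n:ℤ) - k^2) : ℤ) : ℚ) := by
  apply (Finset.sum_subset ?hsub ?hzero).symm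
  case hsub => intro x hx; rw [Finset.mem_Icc] at *; push_cast at *; omega
  case hzero =>
    intro k hk hk2
    rw [Finset.mem_Icc] at hk hk2
    push_cast at hk
    have hk3 : k = (n:ℤ)+1 ∨ k = -((n:ℤ)+1) := by omega
    have hneg : ¬ (0:ℤ) ≤ (n:ℤ) - k^2 := by
      rcases hk3 with rfl | rfl <;> nlinarith [Int.natCast_nonneg n]
    rw [bipartitionNumberZ, if_neg hneg]
    norm_num

/-- Euler-type recursion for the bipartition number:
`p₂(n) = p(n/2) + ∑_{k ∈ ℤ ∖ {0}} (-1)^(k-1) p₂(n - k²)`,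
where `p(n/2) = 0` for odd `n` and `p₂(m) = 0` for `m < 0`.  The sum is restricted to
`-n ≤ k ≤ n`, `k ≠ 0`, which loses nothing since `p₂(n - k²) = 0` once `k² > n`. -/
theorem bipartitionNumber_recursion (n : ℕ) :
    (bipartitionNumber n : ℤ) =
      (if 2 ∣ n then (partitionNumber (n / 2) : ℤ) else 0) +
        ∑ k ∈ (Finset.Icc (-(n : ℤ)) (n : ℤ)).erase 0,
          (-1) ^ (k + 1).natAbs * bipartitionNumberZ ((n : ℤ) - k ^ 2) := by
  have hq := main_q n
  rw [restrict_sum n] at hq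
  have h0 : (0:ℤ) ∈ Finset.Icc (-(n:ℤ)) (n:ℤ) := by rw [Finset.mem_Icc]; omega
  rw [← Finset.add_sum_erase _ _ h0] at hq
  have hzt : (-1:ℚ)^(0:ℤ).natAbs * ((bipartitionNumberZ ((n:ℤ) - 0^2) : ℤ) : ℚ)
      = (bipartitionNumber n : ℚ) := by
    simp [bipartitionNumberZ]
  rw [hzt] at hq
  have hflip : ∑ k ∈ (Finset.Icc (-(n:ℤ)) (n:ℤ)).erase 0,
      (-1:ℚ)^((k+1).natAbs) * ((bipartitionNumberZ ((n:ℤ)-k^2) : ℤ):ℚ)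
      = - ∑ k ∈ (Finset.Icc (-(n:ℤ)) (n:ℤ)).erase 0,
      (-1:ℚ)^(k.natAbs) * ((bipartitionNumberZ ((n:ℤ)-k^2) : ℤ):ℚ) := by
    rw [← Finset.sum_neg_distrib]
    apply Finset.sum_congr rfl
    intro k hk
    rw [neg_one_pow_natAbs_add_one]
    ring
  apply Int.cast_injective (α := ℚ)
  push_cast
  rw [hflip]
  by_cases hdvd : 2 ∣ n
  · rw [if_pos hdvd] at hq
    rw [if_pos hdvd]
    push_cast
    linarith [hq]
  · rw [if_neg hdvd] at hq
    rw [if_neg hdvd]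
    push_cast
    linarith [hq]


end Glue
end

section
/- As an identity of formal power series in z, Σ_{n∈ℤ} (−1)^n z^{n²} = Π_{k=1}^∞ (1−z^k)²/(1−z^{2k}); equivalently, (Σ_{n∈ℤ} (−1)^n z^{n²}) · Π_{k=1}^∞ (1−z^{2k}) = Π_{k=1}^∞ (1−z^k)². Here Σ_{n∈ℤ} (−1)^n z^{n²} = 1 + 2Σ_{n≥1} (−1)^n z^{n²}. -/
open PowerSeries

/-- The theta series `∑_{n ∈ ℤ} (-1)^n z^(n²) = 1 + 2 ∑_{n ≥ 1} (-1)^n z^(n²)` as a formal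
power series over `ℤ`: its `m`-th coefficient is `1` for `m = 0`, `2·(-1)^n` if `m = n²` with
`n ≥ 1`, and `0` otherwise. -/
def thetaAlt : PowerSeries ℤ :=
  PowerSeries.mk fun m =>
    if m = 0 then 1 else if Nat.sqrt m ^ 2 = m then 2 * (-1 : ℤ) ^ Nat.sqrt m else 0

namespace ThetaAux

open Finset

/-- `f ≡ g mod X^m` : coefficients below `m` agree. -/
def EqMod (f g : PowerSeries ℤ) (m : ℕ) : Prop :=
  ∀ i, i < m → PowerSeries.coeff i f = PowerSeries.coeff i g

lemma EqMod.refl (f : PowerSeries ℤ) (m : ℕ) : EqMod f f m := fun _ _ => rfl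

lemma EqMod.symm {f g : PowerSeries ℤ} {m : ℕ} (h : EqMod f g m) : EqMod g f m :=
  fun i hi => (h i hi).symm

lemma EqMod.trans {f g h : PowerSeries ℤ} {m : ℕ} (h1 : EqMod f g m) (h2 : EqMod g h m) :
    EqMod f h m := fun i hi => (h1 i hi).trans (h2 i hi)

lemma EqMod.mul_right {f g : PowerSeries ℤ} {m : ℕ} (h : EqMod f g m) (p : PowerSeries ℤ) :
    EqMod (f * p) (g * p) m := by
  intro i hi
  rw [PowerSeries.coeff_mul, PowerSeries.coeff_mul]
  refine Finset.sum_congr rfl fun q hq => ?_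
  rw [Finset.HasAntidiagonal.mem_antidiagonal] at hq
  rw [h q.1 (lt_of_le_of_lt (le_of_add_le_left hq.le) hi)]

lemma EqMod.mul_left {f g : PowerSeries ℤ} {m : ℕ} (h : EqMod f g m) (p : PowerSeries ℤ) :
    EqMod (p * f) (p * g) m := by
  rw [mul_comm p f, mul_comm p g]; exact h.mul_right p

lemma EqMod.one_sub_Xpow {m e : ℕ} (h : m ≤ e) :
    EqMod (1 - (X : PowerSeries ℤ) ^ e) 1 m := by
  intro i hi
  rw [map_sub, PowerSeries.coeff_X_pow, if_neg (by omega), sub_zero]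

lemma EqMod.prod_one {ι : Type*} (s : Finset ι) (e : ι → ℕ) (m : ℕ)
    (h : ∀ i ∈ s, m ≤ e i) :
    EqMod (∏ i ∈ s, (1 - (X : PowerSeries ℤ) ^ (e i))) 1 m := by
  classical
  induction s using Finset.induction with
  | empty => simp [EqMod.refl]
  | @insert a s' hx ih =>
    rw [Finset.prod_insert hx]
    have h1 : EqMod (1 - (X : PowerSeries ℤ) ^ (e a)) 1 m :=
      EqMod.one_sub_Xpow (h a (Finset.mem_insert_self a s'))
    have h2 := ih fun i hi => h i (Finset.mem_insert_of_mem hi)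
    have := (h1.mul_right (∏ i ∈ s', (1 - (X : PowerSeries ℤ) ^ (e i)))).trans
      (by rw [one_mul]; exact h2)
    simpa using this

lemma EqMod.Xpow_mul {h : PowerSeries ℤ} {r : ℕ} (hh : EqMod h 1 r) (E : ℕ) :
    EqMod ((X : PowerSeries ℤ) ^ E * h) ((X : PowerSeries ℤ) ^ E) (E + r) := by
  intro i hi
  rcases lt_or_ge i E with hE | hE
  · rw [PowerSeries.coeff_X_pow, if_neg (by omega)]
    rw [PowerSeries.coeff_mul]
    refine Finset.sum_eq_zero fun q hq => ?_
    rw [Finset.HasAntidiagonal.mem_antidiagonal] at hq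
    rw [PowerSeries.coeff_X_pow, if_neg (by omega), zero_mul]
  · obtain ⟨d, rfl⟩ := Nat.exists_eq_add_of_le hE
    rw [add_comm E d, PowerSeries.coeff_X_pow_mul, hh d (by omega), PowerSeries.coeff_one,
      PowerSeries.coeff_X_pow]
    by_cases hd : d = 0 <;> simp [hd]

/-- key tail lemma : `X^E * ∏ (1 - X^(e i)) ≡ X^E` provided each `E + e i ≥ m`. -/
lemma EqMod.key {ι : Type*} (s : Finset ι) (e : ι → ℕ) (E m : ℕ)
    (h : ∀ i ∈ s, m ≤ E + e i) :
    EqMod ((X : PowerSeries ℤ) ^ E * ∏ i ∈ s, (1 - (X : PowerSeries ℤ) ^ (e i)))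
      ((X : PowerSeries ℤ) ^ E) m := by
  rcases le_or_gt m E with hE | hE
  · intro i hi
    have hiE : i < E := lt_of_lt_of_le hi hE
    rw [PowerSeries.coeff_X_pow, if_neg (by omega), PowerSeries.coeff_mul]
    refine Finset.sum_eq_zero fun q hq => ?_
    rw [Finset.HasAntidiagonal.mem_antidiagonal] at hq
    rw [PowerSeries.coeff_X_pow, if_neg (by omega), zero_mul]
  · have hprod : EqMod (∏ i ∈ s, (1 - (X : PowerSeries ℤ) ^ (e i))) 1 (m - E) :=
      EqMod.prod_one s e (m - E) fun i hi => by have := h i hi; omega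
    have := EqMod.Xpow_mul hprod E
    intro i hi
    exact this i (by omega)

/-- Gaussian binomial `[n choose k]` in base `q²`, as a power series in `q = X`. -/
noncomputable def B : ℕ → ℕ → PowerSeries ℤ
  | _, 0 => 1
  | 0, _ + 1 => 0
  | n + 1, k + 1 => B n k + X ^ (2 * k + 2) * B n (k + 1)
  termination_by n k => (n, k)

lemma B_z (n : ℕ) : B n 0 = 1 := by rw [B]

lemma B_l (k : ℕ) : B 0 (k + 1) = 0 := by rw [B]

lemma B_rec (n k : ℕ) : B (n + 1) (k + 1) = B n k + X ^ (2 * k + 2) * B n (k + 1) := by rw [B]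

lemma B_zero : ∀ {n k : ℕ}, n < k → B n k = 0 := by
  intro n
  induction n with
  | zero =>
    intro k hk
    match k, hk with
    | k + 1, _ => exact B_l k
  | succ n ih =>
    intro k hk
    match k, hk with
    | k + 1, hk =>
      rw [B_rec, ih (by omega), ih (by omega), mul_zero, add_zero]

lemma B_diag : ∀ n, B n n = 1 := by
  intro n
  induction n with
  | zero => exact B_z 0
  | succ n ih =>
    rw [B_rec, ih, B_zero (by omega), mul_zero, add_zero]

lemma B_one : ∀ n, B n 1 = ∑ i ∈ range n, (X : PowerSeries ℤ) ^ (2 * i) := by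
  intro n
  induction n with
  | zero => rw [show (1:ℕ) = 0 + 1 from rfl, B_l]; simp
  | succ n ih =>
    rw [show (1:ℕ) = 0 + 1 from rfl, B_rec, B_z, ih, Finset.sum_range_succ', Finset.mul_sum]
    have h1 : ∀ i : ℕ, (X : PowerSeries ℤ) ^ (2 * 0 + 2) * X ^ (2 * i) = X ^ (2 * (i + 1)) := by
      intro i; rw [← pow_add]; ring_nf
    rw [Finset.sum_congr rfl fun i _ => h1 i]
    simp [add_comm]

lemma pascal2 : ∀ n k : ℕ, k ≤ n →
    B (n + 1) (k + 1) = B n (k + 1) + X ^ (2 * (n - k)) * B n k := by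
  intro n
  induction n with
  | zero =>
    intro k hk
    interval_cases k
    rw [B_rec, B_l]
    simp [B_z]
  | succ n ih =>
    intro k hk
    match k with
    | 0 =>
      rw [B_rec, B_z, Nat.sub_zero, B_one, Finset.mul_sum, mul_one]
      have h1 : ∀ i : ℕ, (X : PowerSeries ℤ) ^ (2 * 0 + 2) * X ^ (2 * i) = X ^ (2 * (i + 1)) := by
        intro i; rw [← pow_add]; ring_nf
      rw [Finset.sum_congr rfl fun i _ => h1 i]
      have l : (1 : PowerSeries ℤ) + ∑ i ∈ range (n + 1), X ^ (2 * (i + 1))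
          = ∑ i ∈ range (n + 2), X ^ (2 * i) := by
        have h0 : (X : PowerSeries ℤ) ^ (2 * 0) = 1 := by norm_num
        conv_rhs => rw [Finset.sum_range_succ', h0]
        rw [add_comm]
      have r : (∑ i ∈ range (n + 1), (X : PowerSeries ℤ) ^ (2 * i)) + X ^ (2 * (n + 1))
          = ∑ i ∈ range (n + 2), X ^ (2 * i) := by
        conv_rhs => rw [Finset.sum_range_succ]
      rw [l, r]
    | k + 1 =>
      rcases Nat.lt_or_ge k n with hkn | hkn
      · rw [B_rec]
        conv_lhs => rw [ih k (by omega), ih (k + 1) (by omega)]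
        conv_rhs => rw [B_rec n (k + 1), B_rec n k]
        have e1 : 2 * k + 2 * 1 + 2 + 2 * (n - (k + 1)) = 2 * (n + 1) := by omega
        have e2 : 2 * (n + 1 - (k + 1)) + (2 * k + 2) = 2 * (n + 1) := by omega
        have e3 : (n + 1 - (k + 1)) = n - k := by omega
        rw [e3, show n - k = n - (k + 1) + 1 from by omega]
        ring
      · have hkeq : k = n := by omega
        subst hkeq
        rw [B_rec, B_zero (show k + 1 < k + 1 + 1 by omega), B_diag]
        simp

/-- `F m = ∏_{i=1}^m (1 - q^{2i})`. -/
noncomputable def F (m : ℕ) : PowerSeries ℤ := ∏ i ∈ range m, (1 - (X : PowerSeries ℤ) ^ (2 * i + 2))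

set_option maxHeartbeats 1000000 in
lemma B_mul_F : ∀ n k : ℕ, k ≤ n →
    B n k * F (n - k) = ∏ i ∈ range (n - k), (1 - (X : PowerSeries ℤ) ^ (2 * k + 2 * i + 2)) := by
  intro n
  induction n with
  | zero =>
    intro k hk
    interval_cases k
    simp [F, B_z]
  | succ n ih =>
    intro k hk
    match k with
    | 0 =>
      rw [B_z, one_mul, Nat.sub_zero]
      refine Finset.prod_congr rfl fun i _ => ?_
      rw [show 2 * 0 + 2 * i + 2 = 2 * i + 2 from by omega]
    | k + 1 =>
      by_cases hkn : k = n
      · subst hkn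
        rw [Nat.sub_self, B_diag]
        simp [F]
      · have hklt : k < n := by omega
        obtain ⟨m, hm⟩ : ∃ m, n - k = m + 1 := ⟨n - k - 1, by omega⟩
        have hm2 : n - (k + 1) = m := by omega
        have hsub : n + 1 - (k + 1) = m + 1 := by omega
        have ihk := ih k (by omega)
        rw [hm] at ihk
        have ihk1 := ih (k + 1) (by omega)
        rw [hm2] at ihk1
        have hF : F (m + 1) = F m * (1 - X ^ (2 * m + 2)) := Finset.prod_range_succ _ m
        set S : PowerSeries ℤ := ∏ i ∈ range m, (1 - X ^ (2 * (k + 1) + 2 * i + 2)) with hS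
        have key1 : B n k * F (m + 1) = S * (1 - X ^ (2 * k + 2)) := by
          rw [ihk, Finset.prod_range_succ']
          congr 1
          refine Finset.prod_congr rfl fun i _ => ?_
          rw [show 2 * k + 2 * (i + 1) + 2 = 2 * (k + 1) + 2 * i + 2 from by omega]
        have key2 : B n (k + 1) * F (m + 1) = S * (1 - X ^ (2 * m + 2)) := by
          rw [hF, ← mul_assoc, ihk1]
        rw [hsub, B_rec, add_mul, mul_assoc, key1, key2, Finset.prod_range_succ]
        rw [show 2 * (k + 1) + 2 * m + 2 = (2 * k + 2) + (2 * m + 2) from by omega]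
        ring

/-- exponent `(k - N)²` as a natural number. -/
def E (k N : ℕ) : ℕ := (((k : ℤ) - N) ^ 2).toNat

noncomputable def T (N : ℕ) : PowerSeries ℤ :=
  ∑ k ∈ range (2 * N + 1), C ((-1) ^ (N + k)) * X ^ (E k N) * B (2 * N) k

noncomputable def W (N : ℕ) : PowerSeries ℤ :=
  ∑ k ∈ range (2 * N + 2), C ((-1) ^ (N + k)) * X ^ (E k N) * B (2 * N + 1) k

noncomputable def Th (N : ℕ) : PowerSeries ℤ :=
  ∑ k ∈ range (2 * N + 1), C ((-1) ^ (N + k)) * X ^ (E k N)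

lemma T_def (N : ℕ) :
    T N = ∑ k ∈ range (2 * N + 1), C ((-1) ^ (N + k)) * X ^ (E k N) * B (2 * N) k := rfl

lemma W_def (N : ℕ) :
    W N = ∑ k ∈ range (2 * N + 2), C ((-1) ^ (N + k)) * X ^ (E k N) * B (2 * N + 1) k := rfl

lemma Th_def (N : ℕ) :
    Th N = ∑ k ∈ range (2 * N + 1), C ((-1) ^ (N + k)) * X ^ (E k N) := rfl

lemma E_cast (k N : ℕ) : ((E k N : ℤ)) = ((k : ℤ) - N) ^ 2 :=
  Int.toNat_of_nonneg (sq_nonneg _)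

lemma E_succ_succ (k N : ℕ) : E (k + 1) (N + 1) = E k N := by
  unfold E
  congr 1
  push_cast
  ring

lemma E_zero_left (N : ℕ) : E 0 N = N ^ 2 := by
  have h : (((0 : ℕ) : ℤ) - N) ^ 2 = ((N ^ 2 : ℕ) : ℤ) := by push_cast; ring
  rw [E, h, Int.toNat_natCast]

lemma E_shiftA (m N : ℕ) : E (m + 1) (N + 1) + (2 * m + 2) = E (m + 1) N + (2 * N + 1) := by
  have h4 : ((E (m + 1) (N + 1) : ℤ)) + (2 * m + 2) = ((E (m + 1) N : ℤ)) + (2 * N + 1) := by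
    rw [E_cast, E_cast]; push_cast; ring
  exact_mod_cast h4

lemma E_shiftB (m N : ℕ) (hm : m ≤ 2 * N) :
    E (m + 1) N + 2 * (2 * N - m) = E m N + (2 * N + 1) := by
  have hc : ((2 * (2 * N - m) : ℕ) : ℤ) = 2 * (2 * N : ℤ) - 2 * m := by omega
  have h4 : ((E (m + 1) N : ℤ)) + (2 * (2 * N : ℤ) - 2 * m) = ((E m N : ℤ)) + (2 * N + 1) := by
    rw [E_cast, E_cast]; push_cast; ring
  omega

lemma stepA_term (N m : ℕ) :
    C ((-1) ^ (N + 1 + (m + 1))) * X ^ (E (m + 1) (N + 1)) * B (2 * (N + 1)) (m + 1)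
      = C ((-1) ^ (N + m)) * X ^ (E m N) * B (2 * N + 1) m
        - X ^ (2 * N + 1) * (C ((-1) ^ (N + (m + 1))) * X ^ (E (m + 1) N) * B (2 * N + 1) (m + 1)) := by
  have e1 : E (m + 1) (N + 1) = E m N := E_succ_succ m N
  have e2 : E m N + (2 * m + 2) = (2 * N + 1) + E (m + 1) N := by
    have h := E_shiftA m N
    omega
  have s1 : ((-1 : ℤ)) ^ (N + 1 + (m + 1)) = (-1) ^ (N + m) := by
    rw [show N + 1 + (m + 1) = N + m + 1 + 1 from by omega, pow_succ, pow_succ]; ring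
  have s2 : ((-1 : ℤ)) ^ (N + (m + 1)) = -(-1 : ℤ) ^ (N + m) := by
    rw [show N + (m + 1) = N + m + 1 from by omega, pow_succ]; ring
  have expand : (X : PowerSeries ℤ) ^ (E m N) * X ^ (2 * m + 2)
      = X ^ (2 * N + 1) * X ^ (E (m + 1) N) := by
    rw [← pow_add, ← pow_add, e2]
  rw [show 2 * (N + 1) = (2 * N + 1) + 1 from by omega, B_rec, e1, s1, s2, map_neg]
  linear_combination (C ((-1 : ℤ) ^ (N + m)) * B (2 * N + 1) (m + 1)) * expand

lemma stepA (N : ℕ) : T (N + 1) = (1 - X ^ (2 * N + 1)) * W N := by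
  have h1 : T (N + 1)
      = (∑ m ∈ range (2 * N + 2),
          C ((-1) ^ (N + 1 + (m + 1))) * X ^ (E (m + 1) (N + 1)) * B (2 * (N + 1)) (m + 1))
        + C ((-1) ^ (N + 1 + 0)) * X ^ (E 0 (N + 1)) * B (2 * (N + 1)) 0 := by
    rw [T_def, show 2 * (N + 1) + 1 = (2 * N + 2) + 1 from by omega]
    exact Finset.sum_range_succ' _ (2 * N + 2)
  have h2 : (∑ m ∈ range (2 * N + 2),
          C ((-1) ^ (N + 1 + (m + 1))) * X ^ (E (m + 1) (N + 1)) * B (2 * (N + 1)) (m + 1))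
      = ∑ m ∈ range (2 * N + 2),
          (C ((-1) ^ (N + m)) * X ^ (E m N) * B (2 * N + 1) m
            - X ^ (2 * N + 1) * (C ((-1) ^ (N + (m + 1))) * X ^ (E (m + 1) N) * B (2 * N + 1) (m + 1))) :=
    Finset.sum_congr rfl fun m _ => stepA_term N m
  have h3 : (∑ m ∈ range (2 * N + 2),
        C ((-1) ^ (N + (m + 1))) * X ^ (E (m + 1) N) * B (2 * N + 1) (m + 1))
      = W N - C ((-1) ^ (N + 0)) * X ^ (E 0 N) * B (2 * N + 1) 0 := by
    rw [show (2 : ℕ) * N + 2 = (2 * N + 1) + 1 from by omega, Finset.sum_range_succ,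
      B_zero (show 2 * N + 1 < 2 * N + 1 + 1 by omega), W_def,
      show (2 : ℕ) * N + 2 = (2 * N + 1) + 1 from by omega]
    conv_rhs => rw [Finset.sum_range_succ']
    ring
  have hx : (X : PowerSeries ℤ) ^ (2 * N + 1) * X ^ (E 0 N) = X ^ (E 0 (N + 1)) := by
    rw [← pow_add, E_zero_left, E_zero_left,
      show 2 * N + 1 + N ^ 2 = (N + 1) ^ 2 from by ring]
  have s3 : ((-1 : ℤ)) ^ (N + 1 + 0) = -(-1 : ℤ) ^ (N + 0) := by
    rw [show N + 1 + 0 = N + 0 + 1 from by omega, pow_succ]; ring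
  rw [h1, h2, Finset.sum_sub_distrib, ← Finset.mul_sum, ← W_def, h3, s3, map_neg, B_z, B_z]
  linear_combination (C ((-1 : ℤ) ^ (N + 0))) * hx

lemma stepB_term (N m : ℕ) (hm : m ≤ 2 * N) :
    C ((-1) ^ (N + (m + 1))) * X ^ (E (m + 1) N) * B (2 * N + 1) (m + 1)
      = C ((-1) ^ (N + (m + 1))) * X ^ (E (m + 1) N) * B (2 * N) (m + 1)
        - X ^ (2 * N + 1) * (C ((-1) ^ (N + m)) * X ^ (E m N) * B (2 * N) m) := by
  have e2 : E (m + 1) N + 2 * (2 * N - m) = (2 * N + 1) + E m N := by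
    have h := E_shiftB m N hm
    omega
  have s2 : ((-1 : ℤ)) ^ (N + (m + 1)) = -(-1 : ℤ) ^ (N + m) := by
    rw [show N + (m + 1) = N + m + 1 from by omega, pow_succ]; ring
  have expand : (X : PowerSeries ℤ) ^ (E (m + 1) N) * X ^ (2 * (2 * N - m))
      = X ^ (2 * N + 1) * X ^ (E m N) := by
    rw [← pow_add, ← pow_add, e2]
  rw [pascal2 (2 * N) m hm, s2, map_neg]
  linear_combination (-(C ((-1 : ℤ) ^ (N + m))) * B (2 * N) m) * expand

lemma stepB (N : ℕ) : W N = (1 - X ^ (2 * N + 1)) * T N := by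
  have h1 : W N
      = (∑ m ∈ range (2 * N + 1),
          C ((-1) ^ (N + (m + 1))) * X ^ (E (m + 1) N) * B (2 * N + 1) (m + 1))
        + C ((-1) ^ (N + 0)) * X ^ (E 0 N) * B (2 * N + 1) 0 := by
    rw [W_def, show 2 * N + 2 = (2 * N + 1) + 1 from by omega]
    exact Finset.sum_range_succ' _ (2 * N + 1)
  have h2 : (∑ m ∈ range (2 * N + 1),
          C ((-1) ^ (N + (m + 1))) * X ^ (E (m + 1) N) * B (2 * N + 1) (m + 1))
      = ∑ m ∈ range (2 * N + 1),
          (C ((-1) ^ (N + (m + 1))) * X ^ (E (m + 1) N) * B (2 * N) (m + 1)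
            - X ^ (2 * N + 1) * (C ((-1) ^ (N + m)) * X ^ (E m N) * B (2 * N) m)) :=
    Finset.sum_congr rfl fun m hm =>
      stepB_term N m (by have := Finset.mem_range.mp hm; omega)
  have h3 : (∑ m ∈ range (2 * N + 1),
        C ((-1) ^ (N + (m + 1))) * X ^ (E (m + 1) N) * B (2 * N) (m + 1))
      + C ((-1) ^ (N + 0)) * X ^ (E 0 N) * B (2 * N + 1) 0 = T N := by
    have h4 : ∑ k ∈ range (2 * N + 2), (C ((-1) ^ (N + k)) * X ^ (E k N) * B (2 * N) k)
        = T N := by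
      rw [show 2 * N + 2 = (2 * N + 1) + 1 from by omega, Finset.sum_range_succ,
        B_zero (show 2 * N < 2 * N + 1 by omega), T_def]
      ring
    rw [← h4, show 2 * N + 2 = (2 * N + 1) + 1 from by omega, Finset.sum_range_succ' _ (2 * N + 1),
      B_z, B_z]
  rw [h1, h2, Finset.sum_sub_distrib, ← Finset.mul_sum, ← T_def]
  linear_combination h3

lemma T_eq (N : ℕ) : T N = (∏ i ∈ range N, (1 - (X : PowerSeries ℤ) ^ (2 * i + 1))) ^ 2 := by
  induction N with
  | zero =>
    rw [T_def]
    simp [E_zero_left, B_z]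
  | succ N ih =>
    rw [stepA, stepB, ih, Finset.prod_range_succ]
    ring

lemma neg_one_pow_par (a b : ℕ) (h : a % 2 = b % 2) : ((-1 : ℤ)) ^ a = (-1) ^ b := by
  rcases Nat.even_or_odd a with ha | ha
  · have hb : Even b := by rw [Nat.even_iff] at *; omega
    rw [ha.neg_one_pow, hb.neg_one_pow]
  · have hb : Odd b := by rw [Nat.odd_iff] at *; omega
    rw [ha.neg_one_pow, hb.neg_one_pow]

lemma theta_eqmod (N : ℕ) : EqMod thetaAlt (Th N) (N + 1) := by
  intro i hi
  have hiN : i ≤ N := by omega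
  rw [Th_def, map_sum,
    Finset.sum_congr rfl fun k _ => PowerSeries.coeff_C_mul_X_pow ((-1 : ℤ) ^ (N + k)) (E k N) i,
    thetaAlt, PowerSeries.coeff_mk]
  by_cases hi0 : i = 0
  · subst hi0
    rw [if_pos rfl]
    rw [Finset.sum_eq_single N]
    · have hE : E N N = 0 := by
        have h1 : ((N : ℤ) - N) ^ 2 = ((0 : ℕ) : ℤ) := by push_cast; ring
        rw [E, h1, Int.toNat_natCast]
      rw [hE, if_pos rfl]
      exact (Even.neg_one_pow ⟨N, by ring⟩).symm
    · intro k hk hkN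
      rw [if_neg]
      intro hEk
      apply hkN
      have h := E_cast k N
      rw [← hEk] at h
      push_cast at h
      have h0 : ((k : ℤ) - N) = 0 := by
        have h' : ((k : ℤ) - N) ^ 2 = 0 := h.symm
        exact pow_eq_zero_iff two_ne_zero |>.mp h'
      omega
    · intro hN
      exact absurd (Finset.mem_range.mpr (by omega)) hN
  · rw [if_neg hi0]
    by_cases hsq : Nat.sqrt i ^ 2 = i
    · rw [if_pos hsq]
      set s := Nat.sqrt i with hs
      have hI : ((i : ℤ)) = (s : ℤ) ^ 2 := by exact_mod_cast hsq.symm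
      have hs1 : 1 ≤ s := by
        rcases Nat.eq_zero_or_pos s with h | h
        · rw [h] at hsq; simp at hsq; omega
        · exact h
      have hsN : s ≤ N := by nlinarith
      have hne : N - s ≠ N + s := by omega
      have hsub : ({N - s, N + s} : Finset ℕ) ⊆ range (2 * N + 1) := by
        intro x hx
        rw [Finset.mem_insert, Finset.mem_singleton] at hx
        rw [Finset.mem_range]
        omega
      have hzero : ∀ x ∈ range (2 * N + 1), x ∉ ({N - s, N + s} : Finset ℕ) →
          (if i = E x N then ((-1 : ℤ)) ^ (N + x) else 0) = 0 := by
        intro x hx hnot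
        rw [Finset.mem_insert, Finset.mem_singleton] at hnot
        push_neg at hnot
        rw [if_neg]
        intro hEx
        have h := E_cast x N
        rw [← hEx] at h
        have hfac : (((x : ℤ) - N) - s) * (((x : ℤ) - N) + s) = 0 := by
          linear_combination hI - h
        rcases mul_eq_zero.mp hfac with h' | h'
        · exact absurd (by omega : x = N + s) hnot.2
        · exact absurd (by omega : x = N - s) hnot.1
      rw [← Finset.sum_subset hsub hzero, Finset.sum_pair hne]
      have hE1 : i = E (N - s) N := by
        have h := E_cast (N - s) N
        have hc : ((N - s : ℕ) : ℤ) = (N : ℤ) - s := by omega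
        rw [hc] at h
        have h2 : ((E (N - s) N : ℤ)) = ((i : ℕ) : ℤ) := by rw [h, hI]; ring
        exact_mod_cast h2.symm
      have hE2 : i = E (N + s) N := by
        have h := E_cast (N + s) N
        have h2 : ((E (N + s) N : ℤ)) = ((i : ℕ) : ℤ) := by rw [h, hI]; push_cast; ring
        exact_mod_cast h2.symm
      rw [if_pos hE1, if_pos hE2]
      have p1 : ((-1 : ℤ)) ^ (N + (N - s)) = (-1) ^ s := neg_one_pow_par _ _ (by omega)
      have p2 : ((-1 : ℤ)) ^ (N + (N + s)) = (-1) ^ s := neg_one_pow_par _ _ (by omega)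
      rw [p1, p2]
      ring
    · rw [if_neg hsq]
      refine (Finset.sum_eq_zero fun x hx => ?_).symm
      rw [if_neg]
      intro hEx
      apply hsq
      have h := E_cast x N
      have hi2 : i = ((x : ℤ) - N).natAbs ^ 2 := by
        have h2 : ((i : ℕ) : ℤ) = ((((x : ℤ) - N).natAbs ^ 2 : ℕ) : ℤ) := by
          rw [hEx, h]
          push_cast
          exact (sq_abs _).symm
        exact_mod_cast h2
      rw [hi2, Nat.sqrt_eq']

lemma EqMod.sum {ι : Type*} (s : Finset ι) (f g : ι → PowerSeries ℤ) (m : ℕ)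
    (h : ∀ k ∈ s, EqMod (f k) (g k) m) : EqMod (∑ k ∈ s, f k) (∑ k ∈ s, g k) m := by
  intro i hi
  rw [map_sum, map_sum]
  exact Finset.sum_congr rfl fun k hk => h k hk i hi

lemma claim2 (N : ℕ) : EqMod (T N * F (2 * N)) (Th N) (N + 1) := by
  rw [T_def, Th_def, Finset.sum_mul]
  refine EqMod.sum (range (2 * N + 1)) _ _ (N + 1) fun k hk => ?_
  have hk2N : k ≤ 2 * N := by have := Finset.mem_range.mp hk; omega
  have hsplit : F (2 * N) = F (2 * N - k)
      * ∏ i ∈ Finset.Ico (2 * N - k) (2 * N), (1 - (X : PowerSeries ℤ) ^ (2 * i + 2)) := by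
    rw [F, F, Finset.range_eq_Ico, Finset.range_eq_Ico]
    exact (Finset.prod_Ico_consecutive (fun i => (1 - (X : PowerSeries ℤ) ^ (2 * i + 2))) (n := 2 * N - k) (Nat.zero_le _) (by omega)).symm
  have hBF := B_mul_F (2 * N) k hk2N
  have hre : C ((-1) ^ (N + k)) * X ^ (E k N) * B (2 * N) k * F (2 * N)
      = C ((-1) ^ (N + k))
        * ((X ^ (E k N) * ∏ i ∈ range (2 * N - k), (1 - (X : PowerSeries ℤ) ^ (2 * k + 2 * i + 2)))
          * ∏ i ∈ Finset.Ico (2 * N - k) (2 * N), (1 - (X : PowerSeries ℤ) ^ (2 * i + 2))) := by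
    rw [hsplit, ← hBF]
    ring
  rw [hre]
  have s1 : EqMod
      (X ^ (E k N) * ∏ i ∈ range (2 * N - k), (1 - (X : PowerSeries ℤ) ^ (2 * k + 2 * i + 2)))
      (X ^ (E k N)) (N + 1) := by
    apply EqMod.key
    intro i _
    have hb1 : (N : ℤ) + 1 ≤ (E k N : ℤ) + (2 * (k : ℤ) + 2) := by
      rw [E_cast]
      nlinarith [sq_nonneg ((k : ℤ) - N + 1)]
    omega
  have s2 : EqMod
      (X ^ (E k N) * ∏ i ∈ Finset.Ico (2 * N - k) (2 * N), (1 - (X : PowerSeries ℤ) ^ (2 * i + 2)))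
      (X ^ (E k N)) (N + 1) := by
    apply EqMod.key
    intro i hi
    have hi' := (Finset.mem_Ico.mp hi).1
    have hb2 : (N : ℤ) + 1 ≤ (E k N : ℤ) + (2 * (2 * (N : ℤ) - k) + 2) := by
      rw [E_cast]
      nlinarith [sq_nonneg ((k : ℤ) - N - 1)]
    omega
  exact ((s1.mul_right _).trans s2).mul_left _

lemma oddeven (N : ℕ) :
    (∏ i ∈ range N, (1 - (X : PowerSeries ℤ) ^ (2 * i + 1))) * F N
      = ∏ i ∈ range (2 * N), (1 - (X : PowerSeries ℤ) ^ (i + 1)) := by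
  induction N with
  | zero => simp [F]
  | succ N ih =>
    rw [Finset.prod_range_succ, show F (N + 1) = F N * (1 - X ^ (2 * N + 2)) from
      Finset.prod_range_succ _ N]
    rw [show 2 * (N + 1) = (2 * N + 1) + 1 from by omega, Finset.prod_range_succ,
      Finset.prod_range_succ, ← ih]
    rw [show 2 * N + 1 + 1 = 2 * N + 2 from by omega]
    ring

lemma prod_Icc_even (N : ℕ) :
    ∏ k ∈ Finset.Icc 1 N, (1 - (X : PowerSeries ℤ) ^ (2 * k)) = F N := by
  induction N with
  | zero => simp [F]
  | succ N ih =>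
    rw [Finset.prod_Icc_succ_top (by omega : 1 ≤ N + 1), ih,
      show F (N + 1) = F N * (1 - X ^ (2 * N + 2)) from Finset.prod_range_succ _ N,
      show 2 * (N + 1) = 2 * N + 2 from by omega]

lemma prod_Icc_all (N : ℕ) :
    ∏ k ∈ Finset.Icc 1 N, (1 - (X : PowerSeries ℤ) ^ k)
      = ∏ i ∈ range N, (1 - (X : PowerSeries ℤ) ^ (i + 1)) := by
  induction N with
  | zero => simp
  | succ N ih =>
    rw [Finset.prod_Icc_succ_top (by omega : 1 ≤ N + 1), ih, Finset.prod_range_succ]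

lemma main (N : ℕ) :
    EqMod (thetaAlt * F N) ((∏ i ∈ range N, (1 - (X : PowerSeries ℤ) ^ (i + 1))) ^ 2) (N + 1) := by
  have tail1 : EqMod (∏ i ∈ Finset.Ico N (2 * N), (1 - (X : PowerSeries ℤ) ^ (2 * i + 2)))
      1 (N + 1) :=
    EqMod.prod_one _ _ _ fun i hi => by have := (Finset.mem_Ico.mp hi).1; omega
  have tail2 : EqMod (∏ i ∈ Finset.Ico N (2 * N), (1 - (X : PowerSeries ℤ) ^ (i + 1)))
      1 (N + 1) :=
    EqMod.prod_one _ _ _ fun i hi => by have := (Finset.mem_Ico.mp hi).1; omega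
  have hF2 : F (2 * N) = F N * ∏ i ∈ Finset.Ico N (2 * N), (1 - (X : PowerSeries ℤ) ^ (2 * i + 2)) := by
    rw [F, F, Finset.range_eq_Ico, Finset.range_eq_Ico]
    exact (Finset.prod_Ico_consecutive (fun i => (1 - (X : PowerSeries ℤ) ^ (2 * i + 2))) (n := N) (Nat.zero_le _) (by omega)).symm
  have hP2 : ∏ i ∈ range (2 * N), (1 - (X : PowerSeries ℤ) ^ (i + 1))
      = (∏ i ∈ range N, (1 - (X : PowerSeries ℤ) ^ (i + 1)))
        * ∏ i ∈ Finset.Ico N (2 * N), (1 - (X : PowerSeries ℤ) ^ (i + 1)) := by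
    rw [Finset.range_eq_Ico, Finset.range_eq_Ico]
    exact (Finset.prod_Ico_consecutive (fun i => (1 - (X : PowerSeries ℤ) ^ (i + 1))) (n := N) (Nat.zero_le _) (by omega)).symm
  have c1 : EqMod (thetaAlt * F N) (Th N * F N) (N + 1) := (theta_eqmod N).mul_right _
  have c2 : EqMod (Th N * F N) (T N * F (2 * N) * F N) (N + 1) := (claim2 N).symm.mul_right _
  have c3 : T N * F (2 * N) * F N
      = (((∏ i ∈ range N, (1 - (X : PowerSeries ℤ) ^ (2 * i + 1))) ^ 2 * F N) * F N)
        * ∏ i ∈ Finset.Ico N (2 * N), (1 - (X : PowerSeries ℤ) ^ (2 * i + 2)) := by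
    rw [T_eq, hF2]
    ring
  have c5 : ((∏ i ∈ range N, (1 - (X : PowerSeries ℤ) ^ (2 * i + 1))) ^ 2 * F N) * F N
      = (∏ i ∈ range (2 * N), (1 - (X : PowerSeries ℤ) ^ (i + 1))) ^ 2 := by
    rw [← oddeven N]
    ring
  refine c1.trans (c2.trans ?_)
  rw [c3]
  have c4 := tail1.mul_left
    (((∏ i ∈ range N, (1 - (X : PowerSeries ℤ) ^ (2 * i + 1))) ^ 2 * F N) * F N)
  rw [mul_one] at c4
  refine c4.trans ?_
  rw [c5, hP2]
  have h' : EqMod ((∏ i ∈ Finset.Ico N (2 * N), (1 - (X : PowerSeries ℤ) ^ (i + 1)))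
      * ∏ i ∈ Finset.Ico N (2 * N), (1 - (X : PowerSeries ℤ) ^ (i + 1))) 1 (N + 1) :=
    (tail2.mul_right _).trans (by rw [one_mul]; exact tail2)
  have h2 := h'.mul_left ((∏ i ∈ range N, (1 - (X : PowerSeries ℤ) ^ (i + 1))) ^ 2)
  rw [mul_one] at h2
  have heq : ((∏ i ∈ range N, (1 - (X : PowerSeries ℤ) ^ (i + 1)))
        * ∏ i ∈ Finset.Ico N (2 * N), (1 - (X : PowerSeries ℤ) ^ (i + 1))) ^ 2
      = (∏ i ∈ range N, (1 - (X : PowerSeries ℤ) ^ (i + 1))) ^ 2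
        * ((∏ i ∈ Finset.Ico N (2 * N), (1 - (X : PowerSeries ℤ) ^ (i + 1)))
          * ∏ i ∈ Finset.Ico N (2 * N), (1 - (X : PowerSeries ℤ) ^ (i + 1))) := by
    ring
  rw [heq]
  exact h2

end ThetaAux

/-- `(∑_{n ∈ ℤ} (-1)^n z^(n²)) · ∏_{k ≥ 1} (1 - z^(2k)) = ∏_{k ≥ 1} (1 - z^k)²`, i.e.
`∑_{n ∈ ℤ} (-1)^n z^(n²) = ∏_{k ≥ 1} (1 - z^k)²/(1 - z^(2k))`, as formal power series in `z`.
The identity is expressed coefficient-by-coefficient: since the `k`-th factors are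
`1 + O(z^k)`, the `n`-th coefficient of each infinite product equals that of any partial
product over `1 ≤ k ≤ N` with `N ≥ n`. -/
theorem thetaAlt_eq_prod (n N : ℕ) (hnN : n ≤ N) :
    PowerSeries.coeff n
        (thetaAlt * ∏ k ∈ Finset.Icc 1 N, (1 - (PowerSeries.X : PowerSeries ℤ) ^ (2 * k))) =
      PowerSeries.coeff n
        (∏ k ∈ Finset.Icc 1 N, (1 - (PowerSeries.X : PowerSeries ℤ) ^ k) ^ 2) := by
  rw [ThetaAux.prod_Icc_even N, Finset.prod_pow, ThetaAux.prod_Icc_all N]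
  exact ThetaAux.main N n (by omega)
end

section
/- For every nonnegative integer n, |Φ_n⁺| − |Φ_n⁻| = p(n/2), where Φ_n⁺ is the set of similarity classes of symbols of rank n whose defect is congruent to 0 mod 4, Φ_n⁻ is the set of similarity classes of symbols of rank n whose defect is congruent to 2 mod 4, and p(n/2) is interpreted as 0 when n is odd. -/
/-- A symbol in the sense of Lusztig: an ordered pair `(A, B)` of finite sets of
nonnegative integers. -/
structure LusztigSymbol where
  A : Finset ℕ
  B : Finset ℕ

namespace LusztigSymbol

/-- The rank of a symbol: `Σ_{a ∈ A} a + Σ_{b ∈ B} b − ⌊(|A|+|B|−1)²/4⌋`. -/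
def rank (Λ : LusztigSymbol) : ℤ :=
  (∑ a ∈ Λ.A, (a : ℤ)) + (∑ b ∈ Λ.B, (b : ℤ)) -
    ((Λ.A.card : ℤ) + (Λ.B.card : ℤ) - 1) ^ 2 / 4

/-- The defect of a symbol: `|A| − |B|`. -/
def defect (Λ : LusztigSymbol) : ℤ := (Λ.A.card : ℤ) - (Λ.B.card : ℤ)

/-- The elementary shift step generating the similarity relation: each row gets all its
entries increased by `1`, and then `0` is adjoined to each row. -/
def Step (Λ Λ' : LusztigSymbol) : Prop :=
  Λ'.A = insert 0 (Λ.A.image (· + 1)) ∧ Λ'.B = insert 0 (Λ.B.image (· + 1))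

/-- The quotient of the set of symbols by the similarity relation (the equivalence relation
generated by the shift step); its elements are the similarity classes of symbols. -/
def SimClass : Type := Quotient (Relation.EqvGen.setoid Step)

/-- The similarity class of a symbol. -/
def simClass (Λ : LusztigSymbol) : SimClass := Quotient.mk (Relation.EqvGen.setoid Step) Λ

end LusztigSymbol

namespace LusztigSymbol

theorem ext' {Λ Λ' : LusztigSymbol} (h1 : Λ.A = Λ'.A) (h2 : Λ.B = Λ'.B) : Λ = Λ' := by
  cases Λ; cases Λ'; simp_all

/-- The shift step as a function. -/
def st (Λ : LusztigSymbol) : LusztigSymbol :=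
  ⟨insert 0 (Λ.A.image (· + 1)), insert 0 (Λ.B.image (· + 1))⟩

lemma step_iff {Λ Λ' : LusztigSymbol} : Step Λ Λ' ↔ Λ' = st Λ := by
  constructor
  · rintro ⟨h1, h2⟩; exact ext' h1 h2
  · rintro rfl; exact ⟨rfl, rfl⟩

/-- Reduced symbols: not both rows contain `0`. -/
def Reduced (Λ : LusztigSymbol) : Prop := ¬(0 ∈ Λ.A ∧ 0 ∈ Λ.B)

def unstep (Λ : LusztigSymbol) : LusztigSymbol :=
  ⟨(Λ.A.erase 0).image (· - 1), (Λ.B.erase 0).image (· - 1)⟩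

lemma zero_not_mem_shift (S : Finset ℕ) : 0 ∉ S.image (· + 1) := by
  rintro h
  obtain ⟨x, -, hx⟩ := Finset.mem_image.mp h
  omega

lemma insert_zero_image (S : Finset ℕ) :
    ((insert 0 (S.image (· + 1))).erase 0).image (· - 1) = S := by
  rw [Finset.erase_insert (zero_not_mem_shift S), Finset.image_image]
  ext x
  simp

lemma unstep_st (Λ : LusztigSymbol) : unstep (st Λ) = Λ :=
  ext' (insert_zero_image _) (insert_zero_image _)

lemma image_unshift (S : Finset ℕ) (h : 0 ∈ S) :
    insert 0 (((S.erase 0).image (· - 1)).image (· + 1)) = S := by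
  rw [Finset.image_image]
  have he : ((S.erase 0).image ((· + 1) ∘ (· - 1))) = S.erase 0 := by
    ext x
    simp only [Finset.mem_image, Function.comp, Finset.mem_erase]
    constructor
    · rintro ⟨a, ⟨ha0, haS⟩, rfl⟩
      have h1 : a - 1 + 1 = a := by omega
      rw [h1]
      exact ⟨ha0, haS⟩
    · rintro ⟨hx0, hxS⟩
      exact ⟨x, ⟨hx0, hxS⟩, by omega⟩
  rw [he, Finset.insert_erase h]

lemma st_unstep {Λ : LusztigSymbol} (h : ¬ Reduced Λ) : st (unstep Λ) = Λ := by
  rw [Reduced, not_not] at h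
  exact ext' (image_unshift _ h.1) (image_unshift _ h.2)

lemma st_zero_mem (Λ : LusztigSymbol) : 0 ∈ (st Λ).A ∧ 0 ∈ (st Λ).B :=
  ⟨Finset.mem_insert_self _ _, Finset.mem_insert_self _ _⟩

lemma st_not_reduced (Λ : LusztigSymbol) : ¬ Reduced (st Λ) := by
  rw [Reduced, not_not]
  exact st_zero_mem Λ

lemma card_st_A (Λ : LusztigSymbol) : (st Λ).A.card = Λ.A.card + 1 := by
  rw [st, Finset.card_insert_of_notMem (by simp),
    Finset.card_image_of_injective _ (add_left_injective 1)]

lemma card_st_B (Λ : LusztigSymbol) : (st Λ).B.card = Λ.B.card + 1 := by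
  rw [st, Finset.card_insert_of_notMem (by simp),
    Finset.card_image_of_injective _ (add_left_injective 1)]

lemma sum_st (S : Finset ℕ) :
    (∑ a ∈ insert 0 (S.image (· + 1)), ((a : ℕ) : ℤ)) = (∑ a ∈ S, (a : ℤ)) + (S.card : ℤ) := by
  rw [Finset.sum_insert (zero_not_mem_shift S),
    Finset.sum_image (fun x _ y _ h => by omega)]
  push_cast
  rw [Finset.sum_add_distrib]
  simp

lemma rank_st (Λ : LusztigSymbol) : rank (st Λ) = rank Λ := by
  rw [rank, rank, card_st_A, card_st_B]
  rw [show (st Λ).A = insert 0 (Λ.A.image (· + 1)) from rfl,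
    show (st Λ).B = insert 0 (Λ.B.image (· + 1)) from rfl, sum_st Λ.A, sum_st Λ.B]
  push_cast
  set a : ℤ := (Λ.A.card : ℤ)
  set b : ℤ := (Λ.B.card : ℤ)
  have key : (a + 1 + (b + 1) - 1) ^ 2 = (a + b - 1) ^ 2 + (a + b) * 4 := by ring
  rw [key, Int.add_mul_ediv_right _ _ (by norm_num)]
  ring

lemma defect_st (Λ : LusztigSymbol) : defect (st Λ) = defect Λ := by
  rw [defect, defect, card_st_A, card_st_B]; push_cast; ring

lemma card_unstep_lt {Λ : LusztigSymbol} (h : ¬ Reduced Λ) :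
    (unstep Λ).A.card < Λ.A.card := by
  rw [Reduced, not_not] at h
  calc (unstep Λ).A.card ≤ (Λ.A.erase 0).card := Finset.card_image_le
    _ < Λ.A.card := by
        rw [Finset.card_erase_of_mem h.1]
        have : 0 < Λ.A.card := Finset.card_pos.mpr ⟨0, h.1⟩
        omega

/-- Canonical reduced representative. -/
lemma not_reduced_iff (Λ : LusztigSymbol) : ¬ Reduced Λ ↔ (0 ∈ Λ.A ∧ 0 ∈ Λ.B) := by
  rw [Reduced, not_not]

def reduce (Λ : LusztigSymbol) : LusztigSymbol :=
  if h : 0 ∈ Λ.A ∧ 0 ∈ Λ.B then reduce (unstep Λ) else Λ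
termination_by Λ.A.card
decreasing_by exact card_unstep_lt ((not_reduced_iff Λ).mpr h)

lemma reduce_reduced (Λ : LusztigSymbol) : Reduced (reduce Λ) := by
  rw [reduce]
  split
  · exact reduce_reduced (unstep Λ)
  · next h => exact h
termination_by Λ.A.card
decreasing_by exact card_unstep_lt ((not_reduced_iff Λ).mpr (by assumption))

lemma reduce_eqvGen (Λ : LusztigSymbol) : Relation.EqvGen Step Λ (reduce Λ) := by
  rw [reduce]
  split
  · next h =>
    refine Relation.EqvGen.trans _ (unstep Λ) _ ?_ (reduce_eqvGen (unstep Λ))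
    exact Relation.EqvGen.symm _ _
      (Relation.EqvGen.rel _ _ (step_iff.mpr
        (st_unstep ((not_reduced_iff Λ).mpr h)).symm))
  · exact Relation.EqvGen.refl _
termination_by Λ.A.card
decreasing_by exact card_unstep_lt ((not_reduced_iff Λ).mpr (by assumption))

lemma reduce_st (Λ : LusztigSymbol) : reduce (st Λ) = reduce Λ := by
  rw [reduce, dif_pos (st_zero_mem Λ), unstep_st]

lemma reduce_eq_of_eqvGen {Λ Λ' : LusztigSymbol} (h : Relation.EqvGen Step Λ Λ') :
    reduce Λ = reduce Λ' := by
  induction h with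
  | rel x y hxy => rw [step_iff.mp hxy, reduce_st]
  | refl => rfl
  | symm x y _ ih => exact ih.symm
  | trans x y z _ _ ih1 ih2 => exact ih1.trans ih2

lemma reduce_eq_self {Λ : LusztigSymbol} (h : Reduced Λ) : reduce Λ = Λ := by
  rw [reduce, dif_neg h]

lemma rank_eq_of_eqvGen {Λ Λ' : LusztigSymbol} (h : Relation.EqvGen Step Λ Λ') :
    rank Λ = rank Λ' := by
  induction h with
  | rel x y hxy => rw [step_iff.mp hxy, rank_st]
  | refl => rfl
  | symm x y _ ih => exact ih.symm
  | trans x y z _ _ ih1 ih2 => exact ih1.trans ih2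

lemma defect_eq_of_eqvGen {Λ Λ' : LusztigSymbol} (h : Relation.EqvGen Step Λ Λ') :
    defect Λ = defect Λ' := by
  induction h with
  | rel x y hxy => rw [step_iff.mp hxy, defect_st]
  | refl => rfl
  | symm x y _ ih => exact ih.symm
  | trans x y z _ _ ih1 ih2 => exact ih1.trans ih2

lemma rank_reduce (Λ : LusztigSymbol) : rank (reduce Λ) = rank Λ :=
  (rank_eq_of_eqvGen (reduce_eqvGen Λ)).symm

lemma defect_reduce (Λ : LusztigSymbol) : defect (reduce Λ) = defect Λ :=
  (defect_eq_of_eqvGen (reduce_eqvGen Λ)).symm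

lemma simClass_reduce (Λ : LusztigSymbol) : simClass (reduce Λ) = simClass Λ :=
  Quotient.sound (Relation.EqvGen.symm _ _ (reduce_eqvGen Λ))

/-- Counting classes = counting reduced symbols. -/
lemma card_classes_eq (n : ℤ) (r : ℤ) :
    Nat.card {c : SimClass // ∃ Λ, simClass Λ = c ∧ rank Λ = n ∧ defect Λ % 4 = r}
      = Nat.card {Λ : LusztigSymbol // Reduced Λ ∧ rank Λ = n ∧ defect Λ % 4 = r} := by
  refine (Nat.card_eq_of_bijective
    (fun Λ => ⟨simClass Λ.1, Λ.1, rfl, Λ.2.2⟩) ⟨?_, ?_⟩).symm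
  · rintro ⟨Λ, hΛ⟩ ⟨Λ', hΛ'⟩ h
    have : simClass Λ = simClass Λ' := congrArg Subtype.val h
    have he : Relation.EqvGen Step Λ Λ' := Quotient.exact this
    have := reduce_eq_of_eqvGen he
    rw [reduce_eq_self hΛ.1, reduce_eq_self hΛ'.1] at this
    exact Subtype.ext this
  · rintro ⟨c, Λ, hc, h1, h2⟩
    refine ⟨⟨reduce Λ, reduce_reduced Λ, by rw [rank_reduce]; exact h1,
      by rw [defect_reduce]; exact h2⟩, ?_⟩
    exact Subtype.ext (by simpa [simClass_reduce] using hc)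

/-! ### The sign-reversing involution: move the largest element of the symmetric
difference to the other row. -/

lemma rank_swap (A B : Finset ℕ) : rank ⟨A, B⟩ = rank ⟨B, A⟩ := by
  rw [rank, rank]
  dsimp only
  ring_nf

lemma defect_swap (A B : Finset ℕ) : defect ⟨A, B⟩ = - defect ⟨B, A⟩ := by
  rw [defect, defect]; dsimp only; ring

lemma rank_move {A B : Finset ℕ} {x : ℕ} (hxA : x ∈ A) (hxB : x ∉ B) :
    rank ⟨A.erase x, insert x B⟩ = rank ⟨A, B⟩ := by
  have h1 : (∑ a ∈ A.erase x, (a:ℤ)) + (x:ℤ) = ∑ a ∈ A, (a:ℤ) :=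
    Finset.sum_erase_add _ _ hxA
  have h2 : (∑ b ∈ insert x B, (b:ℤ)) = (x:ℤ) + ∑ b ∈ B, (b:ℤ) := Finset.sum_insert hxB
  have h3 : (A.erase x).card = A.card - 1 := Finset.card_erase_of_mem hxA
  have h5 : 1 ≤ A.card := Finset.card_pos.mpr ⟨x, hxA⟩
  rw [rank, rank]
  dsimp only
  rw [h2, h3, Finset.card_insert_of_notMem hxB]
  have hc : ((A.card - 1 : ℕ) : ℤ) + ((B.card + 1 : ℕ) : ℤ) - 1
      = (A.card : ℤ) + (B.card : ℤ) - 1 := by push_cast [h5]; ring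
  rw [hc]
  linarith [h1]

lemma defect_move {A B : Finset ℕ} {x : ℕ} (hxA : x ∈ A) (hxB : x ∉ B) :
    defect ⟨A.erase x, insert x B⟩ = defect ⟨A, B⟩ - 2 := by
  have h3 : (A.erase x).card = A.card - 1 := Finset.card_erase_of_mem hxA
  have h5 : 1 ≤ A.card := Finset.card_pos.mpr ⟨x, hxA⟩
  rw [defect, defect]
  dsimp only
  rw [h3, Finset.card_insert_of_notMem hxB]
  push_cast [h5]
  ring

lemma rank_move' {A B : Finset ℕ} {x : ℕ} (hxA : x ∉ A) (hxB : x ∈ B) :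
    rank ⟨insert x A, B.erase x⟩ = rank ⟨A, B⟩ := by
  rw [rank_swap, rank_move hxB hxA, rank_swap]

lemma defect_move' {A B : Finset ℕ} {x : ℕ} (hxA : x ∉ A) (hxB : x ∈ B) :
    defect ⟨insert x A, B.erase x⟩ = defect ⟨A, B⟩ + 2 := by
  rw [defect_swap, defect_move hxB hxA, defect_swap A B]
  ring

/-- The symmetric difference of the two rows. -/
def sd (Λ : LusztigSymbol) : Finset ℕ := (Λ.A \ Λ.B) ∪ (Λ.B \ Λ.A)

lemma mem_sd {Λ : LusztigSymbol} {x : ℕ} :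
    x ∈ sd Λ ↔ (x ∈ Λ.A ∧ x ∉ Λ.B) ∨ (x ∈ Λ.B ∧ x ∉ Λ.A) := by
  simp [sd, Finset.mem_union, Finset.mem_sdiff]

lemma sd_nonempty {Λ : LusztigSymbol} (h : Λ.A ≠ Λ.B) : (sd Λ).Nonempty := by
  by_contra hne
  rw [Finset.not_nonempty_iff_eq_empty, sd, Finset.union_eq_empty] at hne
  exact h (Finset.Subset.antisymm
    (fun y hy => by_contra fun hy' => by
      have : y ∈ Λ.A \ Λ.B := Finset.mem_sdiff.mpr ⟨hy, hy'⟩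
      simp [hne.1] at this)
    (fun y hy => by_contra fun hy' => by
      have : y ∈ Λ.B \ Λ.A := Finset.mem_sdiff.mpr ⟨hy, hy'⟩
      simp [hne.2] at this))

/-- The involution. -/
def tau (Λ : LusztigSymbol) : LusztigSymbol :=
  if h : (sd Λ).Nonempty then
    if (sd Λ).max' h ∈ Λ.A then
      ⟨Λ.A.erase ((sd Λ).max' h), insert ((sd Λ).max' h) Λ.B⟩
    else
      ⟨insert ((sd Λ).max' h) Λ.A, Λ.B.erase ((sd Λ).max' h)⟩
  else Λ

lemma sd_move {A B : Finset ℕ} {x : ℕ} (hxA : x ∈ A) (hxB : x ∉ B) :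
    sd ⟨A.erase x, insert x B⟩ = sd ⟨A, B⟩ := by
  ext y
  by_cases hy : y = x <;>
    simp only [mem_sd, Finset.mem_erase, Finset.mem_insert, hy] <;> tauto

lemma sd_swap (A B : Finset ℕ) : sd ⟨A, B⟩ = sd ⟨B, A⟩ := by
  rw [sd, sd]; dsimp only; rw [Finset.union_comm]

lemma sd_move' {A B : Finset ℕ} {x : ℕ} (hxA : x ∉ A) (hxB : x ∈ B) :
    sd ⟨insert x A, B.erase x⟩ = sd ⟨A, B⟩ := by
  rw [sd_swap, sd_move hxB hxA, sd_swap]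

lemma rank_tau {Λ : LusztigSymbol} (h : Λ.A ≠ Λ.B) : rank (tau Λ) = rank Λ := by
  rw [tau, dif_pos (sd_nonempty h)]
  have hmem := Finset.max'_mem _ (sd_nonempty h)
  rw [mem_sd] at hmem
  rcases hmem with ⟨h1, h2⟩ | ⟨h1, h2⟩
  · rw [if_pos h1]
    have := rank_move h1 h2
    simpa using this
  · rw [if_neg h2]
    have := rank_move' h2 h1
    simpa using this

lemma defect_tau {Λ : LusztigSymbol} (h : Λ.A ≠ Λ.B) :
    defect (tau Λ) = defect Λ - 2 ∨ defect (tau Λ) = defect Λ + 2 := by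
  rw [tau, dif_pos (sd_nonempty h)]
  have hmem := Finset.max'_mem _ (sd_nonempty h)
  rw [mem_sd] at hmem
  rcases hmem with ⟨h1, h2⟩ | ⟨h1, h2⟩
  · rw [if_pos h1]
    left
    have := defect_move h1 h2
    simpa using this
  · rw [if_neg h2]
    right
    have := defect_move' h2 h1
    simpa using this

lemma reduced_tau {Λ : LusztigSymbol} (h : Λ.A ≠ Λ.B) (hr : Reduced Λ) :
    Reduced (tau Λ) := by
  rw [tau, dif_pos (sd_nonempty h)]
  have hmem := Finset.max'_mem _ (sd_nonempty h)
  rw [mem_sd] at hmem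
  rcases hmem with ⟨h1, h2⟩ | ⟨h1, h2⟩
  · rw [if_pos h1]
    intro ⟨hc, hc'⟩
    have hx0 := (Finset.mem_erase.mp hc).1
    exact hr ⟨(Finset.mem_erase.mp hc).2,
      (Finset.mem_insert.mp hc').resolve_left hx0⟩
  · rw [if_neg h2]
    intro ⟨hc, hc'⟩
    have hx0 := (Finset.mem_erase.mp hc').1
    exact hr ⟨(Finset.mem_insert.mp hc).resolve_left hx0,
      (Finset.mem_erase.mp hc').2⟩

lemma ne_tau {Λ : LusztigSymbol} (h : Λ.A ≠ Λ.B) : (tau Λ).A ≠ (tau Λ).B := by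
  rw [tau, dif_pos (sd_nonempty h)]
  have hmem := Finset.max'_mem _ (sd_nonempty h)
  rw [mem_sd] at hmem
  rcases hmem with ⟨h1, h2⟩ | ⟨h1, h2⟩
  · rw [if_pos h1]
    intro hc
    dsimp only at hc
    have hm : (sd Λ).max' (sd_nonempty h) ∈ insert ((sd Λ).max' (sd_nonempty h)) Λ.B :=
      Finset.mem_insert_self _ _
    rw [← hc] at hm
    exact (Finset.mem_erase.mp hm).1 rfl
  · rw [if_neg h2]
    intro hc
    dsimp only at hc
    have hm : (sd Λ).max' (sd_nonempty h) ∈ insert ((sd Λ).max' (sd_nonempty h)) Λ.A :=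
      Finset.mem_insert_self _ _
    rw [hc] at hm
    exact (Finset.mem_erase.mp hm).1 rfl

lemma tau_eq₁ {Λ : LusztigSymbol} (hne : (sd Λ).Nonempty)
    (h1 : (sd Λ).max' hne ∈ Λ.A) :
    tau Λ = ⟨Λ.A.erase ((sd Λ).max' hne), insert ((sd Λ).max' hne) Λ.B⟩ := by
  rw [tau, dif_pos hne, if_pos h1]

lemma tau_eq₂ {Λ : LusztigSymbol} (hne : (sd Λ).Nonempty)
    (h1 : (sd Λ).max' hne ∉ Λ.A) :
    tau Λ = ⟨insert ((sd Λ).max' hne) Λ.A, Λ.B.erase ((sd Λ).max' hne)⟩ := by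
  rw [tau, dif_pos hne, if_neg h1]

lemma tau_tau {Λ : LusztigSymbol} (h : Λ.A ≠ Λ.B) : tau (tau Λ) = Λ := by
  have hne := sd_nonempty h
  have hmem := Finset.max'_mem _ hne
  rw [mem_sd] at hmem
  set x := (sd Λ).max' hne with hxdef
  rcases hmem with ⟨h1, h2⟩ | ⟨h1, h2⟩
  · have ht : tau Λ = ⟨Λ.A.erase x, insert x Λ.B⟩ := tau_eq₁ hne h1
    rw [ht]
    set Λ' : LusztigSymbol := ⟨Λ.A.erase x, insert x Λ.B⟩ with hΛ'
    have hsd : sd Λ' = sd Λ := sd_move h1 h2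
    have hne' : (sd Λ').Nonempty := by rw [hsd]; exact hne
    have hx' : (sd Λ').max' hne' = x := by simp only [hsd, hxdef]
    have hnotin : (sd Λ').max' hne' ∉ Λ'.A := by
      rw [hx']
      exact fun hc => (Finset.mem_erase.mp hc).1 rfl
    rw [tau_eq₂ hne' hnotin, hx']
    refine ext' ?_ ?_
    · show insert x (Λ.A.erase x) = Λ.A
      exact Finset.insert_erase h1
    · show (insert x Λ.B).erase x = Λ.B
      exact Finset.erase_insert h2
  · have ht : tau Λ = ⟨insert x Λ.A, Λ.B.erase x⟩ := tau_eq₂ hne h2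
    rw [ht]
    set Λ' : LusztigSymbol := ⟨insert x Λ.A, Λ.B.erase x⟩ with hΛ'
    have hsd : sd Λ' = sd Λ := sd_move' h2 h1
    have hne' : (sd Λ').Nonempty := by rw [hsd]; exact hne
    have hx' : (sd Λ').max' hne' = x := by simp only [hsd, hxdef]
    have hin : (sd Λ').max' hne' ∈ Λ'.A := by
      rw [hx']
      exact Finset.mem_insert_self _ _
    rw [tau_eq₁ hne' hin, hx']
    refine ext' ?_ ?_
    · show (insert x Λ.A).erase x = Λ.A
      exact Finset.erase_insert h2
    · show insert x (Λ.B.erase x) = Λ.B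
      exact Finset.insert_erase h1

/-! ### Finiteness of reduced symbols of a given rank -/

lemma sq_card_le : ∀ (c : ℕ) (A : Finset ℕ), A.card = c →
    A.card ^ 2 ≤ 2 * (∑ a ∈ A, a) + A.card := by
  intro c
  induction c with
  | zero => intro A h; simp [h]
  | succ c ih =>
    intro A h
    have hA : A.Nonempty := Finset.card_pos.mp (by omega)
    set M := A.max' hA with hM
    have hMA : M ∈ A := A.max'_mem hA
    have hsub : A ⊆ Finset.range (M + 1) := by
      intro y hy
      rw [Finset.mem_range]
      exact Nat.lt_succ_of_le (A.le_max' y hy)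
    have hcard : c + 1 ≤ M + 1 := by
      have := Finset.card_le_card hsub
      rwa [Finset.card_range, h] at this
    have herase : (A.erase M).card = c := by rw [Finset.card_erase_of_mem hMA, h]; omega
    have hsum : M + ∑ a ∈ A.erase M, a = ∑ a ∈ A, a := Finset.add_sum_erase A (fun x => x) hMA
    have hih := ih (A.erase M) herase
    rw [herase] at hih
    rw [h]
    nlinarith [hih, hsum, hcard]

lemma sq_card_le' {A : Finset ℕ} (h0 : 0 ∉ A) :
    A.card ^ 2 + A.card ≤ 2 * (∑ a ∈ A, a) := by
  have h1 : ∀ a ∈ A, 1 ≤ a := fun a ha => Nat.one_le_iff_ne_zero.mpr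
    (fun hc => h0 (hc ▸ ha))
  have key : (∑ a ∈ A, (a - 1)) + A.card = ∑ a ∈ A, a := by
    rw [Finset.card_eq_sum_ones, ← Finset.sum_add_distrib]
    exact Finset.sum_congr rfl (fun a ha => by have := h1 a ha; omega)
  have hinj : ∀ x ∈ A, ∀ y ∈ A, x - 1 = y - 1 → x = y := by
    intro x hx y hy hxy
    have := h1 x hx; have := h1 y hy
    omega
  have himg : (A.image (· - 1)).card = A.card := by
    rw [Finset.card_image_of_injOn]
    intro x hx y hy hxy
    simp only at hxy
    exact hinj x hx y hy hxy
  have hs : ∑ a ∈ A.image (· - 1), a = ∑ a ∈ A, (a - 1) := Finset.sum_image hinj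
  have h2 := sq_card_le (A.image (· - 1)).card _ rfl
  rw [himg, hs] at h2
  omega

/-- All entries of a reduced symbol of rank `n` are `< 4n² + n + 1`. -/
lemma entry_bound {Λ : LusztigSymbol} {n : ℕ} (hr : Reduced Λ)
    (hrank : rank Λ = (n : ℤ)) : ∀ x ∈ Λ.A ∪ Λ.B, x < 4 * n ^ 2 + n + 1 := by
  set a : ℤ := (Λ.A.card : ℤ) with ha
  set b : ℤ := (Λ.B.card : ℤ) with hb
  set SA : ℤ := ∑ x ∈ Λ.A, (x : ℤ) with hSA
  set SB : ℤ := ∑ x ∈ Λ.B, (x : ℤ) with hSB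
  set q : ℤ := (a + b - 1) ^ 2 / 4 with hq
  have hcastA : SA = ((∑ x ∈ Λ.A, x : ℕ) : ℤ) := by rw [hSA]; exact (Nat.cast_sum _ _).symm
  have hcastB : SB = ((∑ x ∈ Λ.B, x : ℕ) : ℤ) := by rw [hSB]; exact (Nat.cast_sum _ _).symm
  have heq : SA + SB - q = (n : ℤ) := hrank
  have hn0 : (0:ℤ) ≤ (n:ℤ) := Int.natCast_nonneg n
  have hq4 : 4 * q ≤ (a + b - 1) ^ 2 ∧ (a + b - 1) ^ 2 ≤ 4 * q + 3 := by
    have h1 := Int.mul_ediv_add_emod ((a + b - 1) ^ 2) 4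
    have h2 := Int.emod_nonneg ((a + b - 1) ^ 2) (by norm_num : (4:ℤ) ≠ 0)
    have h3 := Int.emod_lt_of_pos ((a + b - 1) ^ 2) (by norm_num : (0:ℤ) < 4)
    constructor <;> omega
  have hA2 : a ^ 2 ≤ 2 * SA + a := by
    rw [ha, hcastA]; exact_mod_cast sq_card_le Λ.A.card _ rfl
  have hB2 : b ^ 2 ≤ 2 * SB + b := by
    rw [hb, hcastB]; exact_mod_cast sq_card_le Λ.B.card _ rfl
  have hcards : 0 ≤ a ∧ 0 ≤ b := ⟨by positivity, by positivity⟩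
  have hsum_bound : a + b ≤ 2 * (n : ℤ) + 1 := by
    rcases not_and_or.mp hr with h0 | h0
    · have hA2' : a ^ 2 + a ≤ 2 * SA := by
        rw [ha, hcastA]; exact_mod_cast sq_card_le' h0
      nlinarith [sq_nonneg (a - b + 1), hq4.1, hA2', hB2, heq]
    · have hB2' : b ^ 2 + b ≤ 2 * SB := by
        rw [hb, hcastB]; exact_mod_cast sq_card_le' h0
      nlinarith [sq_nonneg (b - a + 1), hq4.1, hB2', hA2, heq]
  have hqub : q ≤ 4 * (n : ℤ) ^ 2 := by
    rcases le_or_gt 1 (a + b) with hab | hab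
    · nlinarith [hq4.1, hsum_bound,
        mul_nonneg (by linarith : (0:ℤ) ≤ 2*(n:ℤ) - (a+b-1))
          (by linarith : (0:ℤ) ≤ 2*(n:ℤ) + (a+b-1))]
    · have ha0 : a = 0 ∧ b = 0 := by
        constructor <;> omega
      rw [hq, ha0.1, ha0.2]
      norm_num
      try positivity
  have hSAnn : 0 ≤ SA := Finset.sum_nonneg (fun i _ => by positivity)
  have hSBnn : 0 ≤ SB := Finset.sum_nonneg (fun i _ => by positivity)
  intro x hx
  have hxle : (x : ℤ) ≤ SA + SB := by
    rcases Finset.mem_union.mp hx with h | h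
    · have h1 : (x:ℤ) ≤ SA := by
        exact Finset.single_le_sum (fun i _ => Int.natCast_nonneg i) h
      linarith
    · have h1 : (x:ℤ) ≤ SB := by
        exact Finset.single_le_sum (fun i _ => Int.natCast_nonneg i) h
      linarith
  have hfin : (x : ℤ) < 4 * (n:ℤ)^2 + (n:ℤ) + 1 := by linarith
  exact_mod_cast hfin

lemma finite_reduced (n : ℕ) (r : ℤ) :
    Finite {Λ : LusztigSymbol // Reduced Λ ∧ rank Λ = (n : ℤ) ∧ defect Λ % 4 = r} := by
  set N := 4 * n ^ 2 + n + 1 with hN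
  set T := ((Finset.range N).powerset ×ˢ (Finset.range N).powerset :
    Finset (Finset ℕ × Finset ℕ)) with hT
  refine Finite.of_injective (β := {p // p ∈ T}) (fun Λ => ⟨(Λ.1.A, Λ.1.B), ?_⟩) ?_
  · rw [hT, Finset.mem_product]
    have hb := entry_bound Λ.2.1 Λ.2.2.1
    constructor <;> rw [Finset.mem_powerset] <;> intro y hy <;>
      rw [Finset.mem_range] <;>
      [exact hb y (Finset.mem_union_left _ hy); exact hb y (Finset.mem_union_right _ hy)]
  · rintro ⟨Λ, hΛ⟩ ⟨Λ', hΛ'⟩ h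
    simp only [Subtype.mk.injEq, Prod.mk.injEq] at h
    exact Subtype.ext (ext' h.1 h.2)

/-! ### Degenerate symbols and partitions: the staircase bijection -/

lemma getElem_mapIdx' (l : List ℕ) (f : ℕ → ℕ → ℕ) (i : ℕ) (hi : i < l.length)
    (hi' : i < (l.mapIdx f).length) :
    (l.mapIdx f)[i] = f i l[i] := by
  have := List.getElem_mapIdx (l := l) (f := f) (h := hi')
  simpa using this

lemma sum_mapIdx (l : List ℕ) (f : ℕ → ℕ → ℕ) :
    (l.mapIdx f).sum = ∑ i : Fin l.length, f i (l.get i) := by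
  rw [List.mapIdx_eq_ofFn, List.sum_ofFn]

lemma sum_fin_get (l : List ℕ) : (∑ i : Fin l.length, l.get i) = l.sum := by
  conv_rhs => rw [← List.ofFn_get l]
  rw [List.sum_ofFn]

lemma pairwise_getElem {l : List ℕ} {R : ℕ → ℕ → Prop} (h : l.Pairwise R)
    {i j : ℕ} (hj : j < l.length) (hij : i < j) : R (l[i]'(by omega)) l[j] :=
  List.pairwise_iff_getElem.mp h i j (by omega) hj hij

lemma le_getElem_of_sorted {l : List ℕ} (h : l.Pairwise (· < ·)) (h1 : ∀ x ∈ l, 1 ≤ x) :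
    ∀ i (hi : i < l.length), i + 1 ≤ l[i] := by
  intro i
  induction i with
  | zero => intro hi; exact h1 _ (l.getElem_mem hi)
  | succ i ih =>
    intro hi
    have h2 : l[i]'(by omega) < l[i+1] := pairwise_getElem h hi (by omega)
    have := ih (by omega)
    omega

lemma add_le_of_sorted {l : List ℕ} (h : l.Pairwise (· < ·)) :
    ∀ j (hj : j < l.length) i (hij : i ≤ j), l[i]'(by omega) + j ≤ l[j] + i := by
  intro j
  induction j with
  | zero =>
    intro hj i hij
    have : i = 0 := by omega
    subst this
    omega
  | succ j ihj =>
    intro hj i hij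
    rcases Nat.eq_or_lt_of_le hij with he | hlt
    · subst he; omega
    · have hij' : i ≤ j := by omega
      have h2 : l[j]'(by omega) < l[j+1] := pairwise_getElem h hj (by omega)
      have := ihj (by omega) i hij'
      omega

/-- Subtract the staircase from a finite set (sorted increasingly). -/
def stairDown (A : Finset ℕ) : List ℕ := (A.sort (· ≤ ·)).mapIdx fun i a => a - i

/-- Add the staircase to a multiset (sorted increasingly) to get a finite set. -/
def stairUp (p : Multiset ℕ) : Finset ℕ :=
  (((p.sort (· ≤ ·)).mapIdx fun i a => a + i)).toFinset

section stair

variable {A : Finset ℕ} (h0 : 0 ∉ A)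

lemma sort_pos (h0 : 0 ∉ A) : ∀ x ∈ A.sort (· ≤ ·), 1 ≤ x := by
  intro x hx
  have : x ∈ A := (Finset.mem_sort _).mp hx
  have : x ≠ 0 := fun hc => h0 (hc ▸ this)
  omega

lemma length_stairDown : (stairDown A).length = A.card := by
  rw [stairDown, List.length_mapIdx, Finset.length_sort]

lemma stairDown_pos (h0 : 0 ∉ A) : ∀ x ∈ stairDown A, 0 < x := by
  intro x hx
  rw [stairDown] at hx
  obtain ⟨i, hi, rfl⟩ := List.mem_iff_getElem.mp hx
  have hi' : i < (A.sort (· ≤ ·)).length := by simpa using hi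
  rw [getElem_mapIdx' _ _ _ hi' hi]
  have := le_getElem_of_sorted ((Finset.sortedLT_sort A).pairwise) (sort_pos h0) i hi'
  omega

lemma stairDown_sorted : (stairDown A).Pairwise (· ≤ ·) := by
  rw [stairDown, List.pairwise_iff_getElem]
  intro i j hi hj hij
  have hj' : j < (A.sort (· ≤ ·)).length := by simpa using hj
  have hi' : i < (A.sort (· ≤ ·)).length := by simpa using hi
  rw [getElem_mapIdx' _ _ _ hi' hi, getElem_mapIdx' _ _ _ hj' hj]
  have := add_le_of_sorted ((Finset.sortedLT_sort A).pairwise) j hj' i (by omega)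
  omega

lemma sum_sort_eq (A : Finset ℕ) : (A.sort (· ≤ ·)).sum = ∑ a ∈ A, a := by
  have h1 := List.sum_toFinset (fun a : ℕ => a) (((Finset.sortedLT_sort A).pairwise).nodup)
  rw [Finset.sort_toFinset] at h1
  rw [h1, List.map_id']

lemma sum_stairDown (h0 : 0 ∉ A) :
    2 * (stairDown A).sum + A.card * (A.card - 1) = 2 * ∑ a ∈ A, a := by
  set l := A.sort (· ≤ ·) with hl
  have hsum : (stairDown A).sum = ∑ i : Fin l.length, (l.get i - (i : ℕ)) := by
    rw [stairDown, sum_mapIdx]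
  have hge : ∀ i : Fin l.length, (i : ℕ) + 1 ≤ l.get i := by
    intro i
    have := le_getElem_of_sorted ((Finset.sortedLT_sort A).pairwise) (sort_pos h0) i i.2
    simpa [List.get_eq_getElem] using this
  have hsplit : (∑ i : Fin l.length, (l.get i - (i : ℕ))) + (∑ i : Fin l.length, (i : ℕ))
      = ∑ i : Fin l.length, l.get i := by
    rw [← Finset.sum_add_distrib]
    exact Finset.sum_congr rfl (fun i _ => by have := hge i; omega)
  have hgauss : 2 * (∑ i : Fin l.length, (i : ℕ)) = l.length * (l.length - 1) := by
    rw [Fin.sum_univ_eq_sum_range (fun i => i)]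
    have := Finset.sum_range_id_mul_two l.length
    omega
  have hlen : l.length = A.card := Finset.length_sort _
  have hfin : (∑ i : Fin l.length, l.get i) = ∑ a ∈ A, a := by
    rw [sum_fin_get, hl, sum_sort_eq]
  rw [hsum, ← hlen, ← hgauss, ← hfin, ← hsplit]
  ring

end stair

section stairup

variable {p : Multiset ℕ} (hp : ∀ x ∈ p, 0 < x)

lemma stairUp_list_sorted (p : Multiset ℕ) :
    ((p.sort (· ≤ ·)).mapIdx fun i a => a + i).Pairwise (· < ·) := by
  rw [List.pairwise_iff_getElem]
  intro i j hi hj hij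
  set r := p.sort (· ≤ ·) with hr
  have hj' : j < r.length := by simpa using hj
  have hi' : i < r.length := by simpa using hi
  rw [getElem_mapIdx' _ _ _ hi' hi, getElem_mapIdx' _ _ _ hj' hj]
  have : r[i] ≤ r[j] := pairwise_getElem (Multiset.pairwise_sort p _) hj' hij
  omega

lemma stairUp_list_nodup (p : Multiset ℕ) :
    ((p.sort (· ≤ ·)).mapIdx fun i a => a + i).Nodup :=
  (stairUp_list_sorted p).nodup

lemma card_stairUp (p : Multiset ℕ) : (stairUp p).card = Multiset.card p := by
  rw [stairUp, List.toFinset_card_of_nodup (stairUp_list_nodup p), List.length_mapIdx,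
    Multiset.length_sort]

lemma zero_not_mem_stairUp (hp : ∀ x ∈ p, 0 < x) : 0 ∉ stairUp p := by
  intro hc
  rw [stairUp, List.mem_toFinset] at hc
  obtain ⟨i, hi, heq⟩ := List.mem_iff_getElem.mp hc
  have hi' : i < (p.sort (· ≤ ·)).length := by simpa using hi
  rw [getElem_mapIdx' _ _ _ hi' hi] at heq
  have : (p.sort (· ≤ ·))[i] ∈ p := by
    rw [← Multiset.mem_sort (· ≤ ·)]
    exact List.getElem_mem _
  have := hp _ this
  omega

lemma sort_stairUp (p : Multiset ℕ) :
    (stairUp p).sort (· ≤ ·) = (p.sort (· ≤ ·)).mapIdx fun i a => a + i := by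
  set g := (p.sort (· ≤ ·)).mapIdx fun i a => a + i with hg
  apply List.Perm.eq_of_pairwise' (l₂ := g) (Finset.pairwise_sort _ _)
    ((stairUp_list_sorted p).imp (fun h => le_of_lt h))
  rw [← Multiset.coe_eq_coe]
  have h1 : ((stairUp p).sort (· ≤ ·) : Multiset ℕ) = (stairUp p).val :=
    Finset.sort_eq _ _
  rw [h1, stairUp]
  show (g.toFinset).val = (g : Multiset ℕ)
  rw [List.toFinset, Multiset.toFinset_val]
  exact Multiset.dedup_eq_self.mpr (Multiset.coe_nodup.mpr (stairUp_list_nodup p))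

lemma sum_stairUp (p : Multiset ℕ) :
    2 * (∑ a ∈ stairUp p, a)
      = 2 * p.sum + (Multiset.card p) * (Multiset.card p - 1) := by
  set r := p.sort (· ≤ ·) with hr
  set g := r.mapIdx fun i a => a + i with hg
  have h1 : (∑ a ∈ stairUp p, a) = g.sum := by
    have h2 := List.sum_toFinset (fun a : ℕ => a) (stairUp_list_nodup p)
    rw [show stairUp p = g.toFinset from rfl, h2, List.map_id']
  have h3 : g.sum = ∑ i : Fin r.length, (r.get i + (i : ℕ)) := by
    rw [hg, sum_mapIdx]
  have h4 : (∑ i : Fin r.length, (r.get i + (i : ℕ)))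
      = (∑ i : Fin r.length, r.get i) + ∑ i : Fin r.length, (i : ℕ) :=
    Finset.sum_add_distrib
  have h5 : (∑ i : Fin r.length, r.get i) = p.sum := by
    rw [sum_fin_get, hr]
    conv_rhs => rw [← Multiset.sort_eq p (· ≤ ·)]
    rfl
  have hgauss : 2 * (∑ i : Fin r.length, (i : ℕ)) = r.length * (r.length - 1) := by
    rw [Fin.sum_univ_eq_sum_range (fun i => i)]
    have := Finset.sum_range_id_mul_two r.length
    omega
  have hlen : r.length = Multiset.card p := Multiset.length_sort _
  rw [h1, h3, h4, ← h5, ← hlen, ← hgauss]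
  ring

end stairup

lemma stairDown_stairUp (p : Multiset ℕ) :
    stairDown (stairUp p) = p.sort (· ≤ ·) := by
  rw [stairDown, sort_stairUp]
  set r := p.sort (· ≤ ·) with hr
  apply List.ext_getElem
  · simp
  · intro i h1 h2
    have hri : i < r.length := by simpa using h2
    have hgi : i < (r.mapIdx fun i a => a + i).length := by simpa using h2
    rw [getElem_mapIdx' _ _ _ hgi h1, getElem_mapIdx' _ _ _ hri hgi]
    omega

lemma coe_stairDown_stairUp (p : Multiset ℕ) :
    ((stairDown (stairUp p) : List ℕ) : Multiset ℕ) = p := by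
  rw [stairDown_stairUp, Multiset.sort_eq]

lemma sort_coe_stairDown (A : Finset ℕ) (h0 : 0 ∉ A) :
    Multiset.sort ((stairDown A : List ℕ) : Multiset ℕ) (· ≤ ·) = stairDown A := by
  apply List.Perm.eq_of_pairwise' (l₂ := stairDown A)
    (Multiset.pairwise_sort _ _)
    stairDown_sorted (Multiset.coe_eq_coe.mp (Multiset.sort_eq _ _))

lemma stairUp_stairDown {A : Finset ℕ} (h0 : 0 ∉ A) :
    stairUp ((stairDown A : List ℕ) : Multiset ℕ) = A := by
  rw [stairUp, sort_coe_stairDown A h0]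
  set l := A.sort (· ≤ ·) with hl
  have key : ((stairDown A).mapIdx fun i a => a + i) = l := by
    apply List.ext_getElem
    · rw [List.length_mapIdx, length_stairDown, hl, Finset.length_sort]
    · intro i h1 h2
      have hsi : i < (stairDown A).length := by simpa using h1
      have hli : i < l.length := by
        have hx := length_stairDown (A := A)
        have hlen : l.length = A.card := Finset.length_sort _
        omega
      rw [getElem_mapIdx' _ _ _ hsi h1]
      have hval : (stairDown A)[i]'hsi = l[i]'hli - i := getElem_mapIdx' l _ i hli hsi
      rw [hval]
      have hsl : l.Pairwise (· < ·) := by rw [hl]; exact (Finset.sortedLT_sort A).pairwise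
      have hp1 : ∀ x ∈ l, 1 ≤ x := by rw [hl]; exact sort_pos h0
      have := le_getElem_of_sorted hsl hp1 i hli
      omega
  rw [key, hl, Finset.sort_toFinset]

/-- The staircase bijection between degenerate reduced symbols' rows and partitions. -/
def stairEquiv (k : ℕ) :
    {A : Finset ℕ // 0 ∉ A ∧ 2 * (∑ a ∈ A, a) = 2 * k + A.card * (A.card - 1)}
      ≃ Nat.Partition k where
  toFun A := ⟨((stairDown A.1 : List ℕ) : Multiset ℕ),
    fun hi => stairDown_pos A.2.1 _ (by simpa using hi),
    by
      have h1 := sum_stairDown A.2.1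
      have h2 := A.2.2
      have h3 : ((stairDown A.1 : List ℕ) : Multiset ℕ).sum = (stairDown A.1).sum := by
        simp
      rw [h3]
      linarith [h1, h2]⟩
  invFun p := ⟨stairUp p.parts,
    zero_not_mem_stairUp (fun x hx => p.parts_pos hx),
    by
      have h1 := sum_stairUp p.parts
      have h2 := card_stairUp p.parts
      have h3 := p.parts_sum
      rw [h2]
      linarith [h1, h3]⟩
  left_inv A := Subtype.ext (stairUp_stairDown A.2.1)
  right_inv p := Nat.Partition.ext (coe_stairDown_stairUp p.parts)

/-! ### Degenerate symbols -/

lemma rank_diag (A : Finset ℕ) :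
    rank ⟨A, A⟩ = 2 * (∑ a ∈ A, (a:ℤ)) - (A.card:ℤ) * ((A.card:ℤ) - 1) := by
  have key : ∀ u : ℤ, (4*u+1)/4 = u := fun u => by omega
  have h2 : (2*(A.card:ℤ)-1)^2 = 4*((A.card:ℤ)^2 - A.card) + 1 := by ring
  rw [rank]
  dsimp only
  rw [show ((A.card:ℤ) + A.card - 1) = 2*(A.card:ℤ) - 1 by ring, h2, key]
  ring

lemma defect_diag (A : Finset ℕ) : defect ⟨A, A⟩ = 0 := by
  rw [defect]; dsimp only; ring

lemma diag_cond_iff {A : Finset ℕ} {k : ℕ} :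
    rank ⟨A, A⟩ = ((2 * k : ℕ) : ℤ) ↔ 2 * (∑ a ∈ A, a) = 2 * k + A.card * (A.card - 1) := by
  rw [rank_diag]
  have hcast : (∑ a ∈ A, (a:ℤ)) = ((∑ a ∈ A, a : ℕ) : ℤ) := (Nat.cast_sum _ _).symm
  rw [hcast]
  rcases Nat.eq_zero_or_pos A.card with hz | hpos
  · rw [Finset.card_eq_zero] at hz
    subst hz
    simp only [Finset.sum_empty, Finset.card_empty, Nat.cast_zero]
    constructor
    · intro h
      have hk : ((2*k:ℕ):ℤ) = 0 := by linarith
      have hk' : (2*k : ℕ) = 0 := by exact_mod_cast hk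
      omega
    · intro h
      have hk : 2*k = 0 := by omega
      rw [hk]
      norm_num
  · constructor
    · intro h
      push_cast at h
      have h3 : ((2 * (∑ a ∈ A, a) : ℕ) : ℤ) = ((2*k + A.card * (A.card - 1) : ℕ) : ℤ) := by
        push_cast [Nat.cast_sub hpos]
        linarith
      exact_mod_cast h3
    · intro h
      have h3 := congrArg (fun t : ℕ => (t : ℤ)) h
      push_cast [Nat.cast_sub hpos] at h3
      push_cast
      linarith

lemma card_diag (n : ℕ) :
    Nat.card {Λ : LusztigSymbol //
        (Reduced Λ ∧ rank Λ = (n:ℤ) ∧ defect Λ % 4 = 0) ∧ Λ.A = Λ.B}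
      = if 2 ∣ n then Nat.card (Nat.Partition (n / 2)) else 0 := by
  by_cases h2 : 2 ∣ n
  · obtain ⟨k, rfl⟩ := h2
    rw [if_pos ⟨k, rfl⟩]
    have hdiag : ∀ Λ : LusztigSymbol, Λ.A = Λ.B → Λ = ⟨Λ.A, Λ.A⟩ :=
      fun Λ h => ext' rfl h.symm
    have e : {Λ : LusztigSymbol //
        (Reduced Λ ∧ rank Λ = ((2*k : ℕ):ℤ) ∧ defect Λ % 4 = 0) ∧ Λ.A = Λ.B}
        ≃ {A : Finset ℕ // 0 ∉ A ∧ 2 * (∑ a ∈ A, a) = 2 * k + A.card * (A.card - 1)} := {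
      toFun := fun Λ => ⟨Λ.1.A, by
          have hr := Λ.2.1.1
          rw [hdiag Λ.1 Λ.2.2] at hr
          exact fun hc => hr ⟨hc, hc⟩,
        by
          have hr := Λ.2.1.2.1
          rw [hdiag Λ.1 Λ.2.2] at hr
          exact diag_cond_iff.mp hr⟩
      invFun := fun A => ⟨⟨A.1, A.1⟩,
        ⟨fun hc => A.2.1 hc.1, diag_cond_iff.mpr A.2.2, by simp [defect_diag]⟩, rfl⟩
      left_inv := fun Λ => Subtype.ext (hdiag Λ.1 Λ.2.2).symm
      right_inv := fun A => Subtype.ext rfl }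
    rw [Nat.card_congr e, Nat.card_congr (stairEquiv k)]
    have h24 : 2 * k / 2 = k := by omega
    rw [h24]
  · rw [if_neg h2]
    have he : IsEmpty {Λ : LusztigSymbol //
        (Reduced Λ ∧ rank Λ = (n:ℤ) ∧ defect Λ % 4 = 0) ∧ Λ.A = Λ.B} := by
      refine ⟨fun x => ?_⟩
      obtain ⟨Λ, ⟨hred, hrank, hdef⟩, hAB⟩ := x
      have hΛ : Λ = ⟨Λ.A, Λ.A⟩ := ext' rfl hAB.symm
      rw [hΛ, rank_diag] at hrank
      obtain ⟨c, hc⟩ := Int.even_mul_succ_self ((Λ.A.card:ℤ) - 1)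
      apply h2
      have hdvd : (2:ℤ) ∣ (n:ℤ) := ⟨(∑ a ∈ Λ.A, (a:ℤ)) - c, by linarith [hc, hrank]⟩
      exact_mod_cast hdvd
    rw [Nat.card_of_isEmpty]

/-! ### The `τ` equivalence between nondegenerate classes -/

set_option maxHeartbeats 2000000 in
def tauEquiv (n : ℕ) :
    {Λ : LusztigSymbol //
      (Reduced Λ ∧ rank Λ = (n:ℤ) ∧ defect Λ % 4 = 0) ∧ Λ.A ≠ Λ.B}
    ≃ {Λ : LusztigSymbol // Reduced Λ ∧ rank Λ = (n:ℤ) ∧ defect Λ % 4 = 2} where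
  toFun Λ := ⟨tau Λ.1, reduced_tau Λ.2.2 Λ.2.1.1,
    by rw [rank_tau Λ.2.2]; exact Λ.2.1.2.1,
    by
      have h0 := Λ.2.1.2.2
      rcases defect_tau Λ.2.2 with h | h <;> omega⟩
  invFun Λ := by
    have hne : Λ.1.A ≠ Λ.1.B := by
      intro hc
      have h0 : defect Λ.1 = 0 := by
        rw [defect, hc]; ring
      have := Λ.2.2.2
      omega
    exact ⟨tau Λ.1,
      ⟨reduced_tau hne Λ.2.1,
        by rw [rank_tau hne]; exact Λ.2.2.1,
        by
          have h0 := Λ.2.2.2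
          rcases defect_tau hne with h | h <;> omega⟩,
      ne_tau hne⟩
  left_inv Λ := Subtype.ext (tau_tau Λ.2.2)
  right_inv Λ := by
    have hne : Λ.1.A ≠ Λ.1.B := by
      intro hc
      have h0 : defect Λ.1 = 0 := by rw [defect, hc]; ring
      have := Λ.2.2.2
      omega
    exact Subtype.ext (tau_tau hne)

end LusztigSymbol

open LusztigSymbol in
/-- `|Φ_n⁺| − |Φ_n⁻| = p(n/2)`, where `Φ_n⁺` (resp. `Φ_n⁻`) is the set of similarity classes
of symbols of rank `n` whose defect is `≡ 0 (mod 4)` (resp. `≡ 2 (mod 4)`), and `p(n/2)` is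
interpreted as `0` when `n` is odd. -/
theorem card_simClasses_defect_mod_four (n : ℕ) :
    (Nat.card {c : SimClass // ∃ Λ, simClass Λ = c ∧ rank Λ = n ∧ defect Λ % 4 = 0} : ℤ) -
      (Nat.card {c : SimClass // ∃ Λ, simClass Λ = c ∧ rank Λ = n ∧ defect Λ % 4 = 2} : ℤ) =
      if 2 ∣ n then (partitionNumber (n / 2) : ℤ) else 0 := by
  classical
  rw [card_classes_eq (n:ℤ) 0, card_classes_eq (n:ℤ) 2]
  haveI hFinX : Finite {Λ : LusztigSymbol //
      Reduced Λ ∧ rank Λ = (n:ℤ) ∧ defect Λ % 4 = 0} := finite_reduced n 0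
  haveI hFinY : Finite {Λ : LusztigSymbol //
      Reduced Λ ∧ rank Λ = (n:ℤ) ∧ defect Λ % 4 = 2} := finite_reduced n 2
  have e1 : {Λ : LusztigSymbol // Reduced Λ ∧ rank Λ = (n:ℤ) ∧ defect Λ % 4 = 0}
      ≃ {x : {Λ : LusztigSymbol // Reduced Λ ∧ rank Λ = (n:ℤ) ∧ defect Λ % 4 = 0} //
            x.1.A = x.1.B}
        ⊕ {x : {Λ : LusztigSymbol // Reduced Λ ∧ rank Λ = (n:ℤ) ∧ defect Λ % 4 = 0} //
            ¬ x.1.A = x.1.B} :=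
    (Equiv.sumCompl _).symm
  have e2 := Equiv.subtypeSubtypeEquivSubtypeInter
    (fun Λ : LusztigSymbol => Reduced Λ ∧ rank Λ = (n:ℤ) ∧ defect Λ % 4 = 0)
    (fun Λ => Λ.A = Λ.B)
  have e3 := Equiv.subtypeSubtypeEquivSubtypeInter
    (fun Λ : LusztigSymbol => Reduced Λ ∧ rank Λ = (n:ℤ) ∧ defect Λ % 4 = 0)
    (fun Λ => Λ.A ≠ Λ.B)
  have key : Nat.card {Λ : LusztigSymbol //
        Reduced Λ ∧ rank Λ = (n:ℤ) ∧ defect Λ % 4 = 0}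
      = Nat.card {Λ : LusztigSymbol //
          (Reduced Λ ∧ rank Λ = (n:ℤ) ∧ defect Λ % 4 = 0) ∧ Λ.A = Λ.B}
        + Nat.card {Λ : LusztigSymbol //
            Reduced Λ ∧ rank Λ = (n:ℤ) ∧ defect Λ % 4 = 2} := by
    rw [Nat.card_congr e1, Nat.card_sum, Nat.card_congr e2,
      Nat.card_congr (e3.trans (tauEquiv n))]
  rw [key, card_diag n]
  split_ifs with h
  · rw [partitionNumber]
    push_cast
    ring
  · push_cast
    ring
end
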